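/- arXiv:1204.3132 — 4 statements merged into one kernel-verified Lean document; each statement's English description precedes it below -/
import Mathlib

section
/- Define σ̂²_SI,PD = σ²·(U_obs/(n − 1))·(1 + (U_imp + (n_mis·n_obs/n)·(Z̄_imp + Z_PD)²)/U_PD). If ν_PD > 4 then Var(σ̂²_SI,PD) = (σ⁴·(n_obs − 1)/(n − 1)²)·((n_obs + 1)·(1 + 2·n_mis/(ν_PD − 2) + n_mis·(n_mis + 2)/((ν_PD − 2)·(ν_PD − 4))) − (n_obs − 1)·(1 + n_mis/(ν_PD − 2))²). -/
set_option maxHeartbeats 1000000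
open MeasureTheory ProbabilityTheory Real Set
open scoped NNReal ENNReal

namespace S11


lemma gamma_integral_eq {a r : ℝ} (ha : 0 < a) (hr : 0 < r) (g : ℝ → ℝ) :
    ∫ x, g x ∂(gammaMeasure a r) = ∫ x, gammaPDFReal a r x * g x := by
  rw [gammaMeasure]
  have h1 : (gammaPDF a r) = fun x => ((Real.toNNReal (gammaPDFReal a r x) : ℝ≥0) : ℝ≥0∞) := by
    funext x; rw [gammaPDF_eq, ENNReal.ofReal, gammaPDFReal]
  rw [h1, integral_withDensity_eq_integral_smul]
  · congr 1; funext x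
    rw [NNReal.smul_def, Real.coe_toNNReal _ (gammaPDFReal_nonneg ha hr x)]
    rfl
  · exact (measurable_gammaPDFReal a r).real_toNNReal

lemma gamma_ae_nonneg {a r : ℝ} : ∀ᵐ x ∂(gammaMeasure a r), 0 ≤ x := by
  rw [ae_iff]
  have h : {x : ℝ | ¬ 0 ≤ x} = Iio 0 := by ext x; simp
  rw [h, gammaMeasure, withDensity_apply _ measurableSet_Iio]
  simpa using lintegral_gammaPDF_of_nonpos (le_refl (0:ℝ)) (a := a) (r := r)

lemma gamma_moment {a r p : ℝ} (ha : 0 < a) (hr : 0 < r) (hap : 0 < a + p) :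
    ∫ x, (if 0 < x then x ^ p else 0) ∂(gammaMeasure a r)
      = Real.Gamma (a + p) / Real.Gamma a * (1 / r) ^ p := by
  rw [gamma_integral_eq ha hr]
  have h0 : ∀ x ∉ Ioi (0:ℝ), gammaPDFReal a r x * (if 0 < x then x ^ p else 0) = 0 := by
    intro x hx
    rw [if_neg (by simpa using hx), mul_zero]
  rw [← setIntegral_eq_integral_of_forall_compl_eq_zero h0]
  have h1 : ∀ x ∈ Ioi (0:ℝ), gammaPDFReal a r x * (if 0 < x then x ^ p else 0)
      = (r ^ a / Real.Gamma a) * (x ^ (a + p - 1) * Real.exp (-(r * x))) := by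
    intro x hx
    have hx' : (0:ℝ) < x := hx
    rw [if_pos hx', gammaPDFReal, if_pos hx'.le]
    rw [show a + p - 1 = (a - 1) + p by ring, Real.rpow_add hx']
    ring
  rw [setIntegral_congr_fun measurableSet_Ioi h1, integral_const_mul,
    integral_rpow_mul_exp_neg_mul_Ioi hap hr]
  have hΓ : Real.Gamma a ≠ 0 := (Real.Gamma_pos_of_pos ha).ne'
  have h2 : (1 / r : ℝ) ^ (a + p) = (1/r) ^ a * (1/r) ^ p := Real.rpow_add (by positivity) _ _
  have h3 : r ^ a * (1/r : ℝ) ^ a = 1 := by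
    rw [← Real.mul_rpow hr.le (by positivity), mul_one_div, div_self hr.ne', Real.one_rpow]
  calc r ^ a / Real.Gamma a * ((1 / r) ^ (a + p) * Real.Gamma (a + p))
      = (r ^ a * (1/r) ^ a) * (Real.Gamma (a + p) / Real.Gamma a * (1/r) ^ p) := by
        rw [h2]; ring
    _ = Real.Gamma (a + p) / Real.Gamma a * (1 / r) ^ p := by rw [h3, one_mul]

lemma gamma_moment_integrable {a r p : ℝ} (ha : 0 < a) (hr : 0 < r) (hap : 0 < a + p) :
    Integrable (fun x => if 0 < x then x ^ p else 0) (gammaMeasure a r) := by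
  rw [gammaMeasure, show gammaPDF a r = fun x => ENNReal.ofReal (gammaPDFReal a r x) from rfl,
    integrable_withDensity_iff_integrable_smul' ((measurable_gammaPDFReal a r).ennreal_ofReal)
    (ae_of_all _ fun x => ENNReal.ofReal_lt_top)]
  have h1 : (fun x : ℝ => (ENNReal.ofReal (gammaPDFReal a r x)).toReal • (if 0 < x then x ^ p else 0))
      = (Ioi (0:ℝ)).indicator
          (fun x => (r ^ a / Real.Gamma a) * (x ^ (a + p - 1) * Real.exp (-(r * x)))) := by
    funext x
    rw [ENNReal.toReal_ofReal (gammaPDFReal_nonneg ha hr x), smul_eq_mul, gammaPDFReal]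
    by_cases hx : 0 < x
    · rw [if_pos hx, if_pos hx.le, indicator_of_mem (mem_Ioi.mpr hx),
        show a + p - 1 = (a - 1) + p by ring, Real.rpow_add hx]
      ring
    · rw [if_neg hx, mul_zero, indicator_of_notMem (by simpa using hx)]
  rw [h1, integrable_indicator_iff measurableSet_Ioi]
  have h2 : IntegrableOn (fun x : ℝ => x ^ (a + p - 1) * Real.exp (-(r * x))) (Ioi 0) := by
    have := integrableOn_rpow_mul_exp_neg_mul_rpow (p := 1) (s := a + p - 1) (b := r)
      (by linarith) one_pos hr
    refine this.congr_fun (fun x hx => ?_) measurableSet_Ioi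
    dsimp only
    rw [Real.rpow_one, neg_mul]
  exact h2.const_mul _



lemma chisq_ae_eq {p : ℝ} {g : ℝ → ℝ} (hg : ∀ x : ℝ, 0 ≤ x → g x = if 0 < x then x ^ p else 0)
    {a r : ℝ} : g =ᵐ[gammaMeasure a r] (fun x => if 0 < x then x ^ p else 0) := by
  filter_upwards [gamma_ae_nonneg (a := a) (r := r)] with x hx using hg x hx

lemma chisq_int {ν : ℝ} {p : ℝ} (hν : 0 < ν/2 + p) (hν0 : 0 < ν) {g : ℝ → ℝ}
    (hg : ∀ x : ℝ, 0 ≤ x → g x = if 0 < x then x ^ p else 0) :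
    Integrable g (gammaMeasure (ν/2) (1/2)) :=
  (gamma_moment_integrable (by linarith) one_half_pos hν).congr (chisq_ae_eq hg).symm

lemma chisq_val {ν : ℝ} {p : ℝ} (hν : 0 < ν/2 + p) (hν0 : 0 < ν) {g : ℝ → ℝ}
    (hg : ∀ x : ℝ, 0 ≤ x → g x = if 0 < x then x ^ p else 0) :
    ∫ x, g x ∂(gammaMeasure (ν/2) (1/2))
      = Real.Gamma (ν/2 + p) / Real.Gamma (ν/2) * 2 ^ p := by
  rw [integral_congr_ae (chisq_ae_eq hg), gamma_moment (by linarith) one_half_pos hν]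
  norm_num

lemma hg1 : ∀ x : ℝ, 0 ≤ x → x = if 0 < x then x ^ (1:ℝ) else 0 := by
  intro x hx
  rcases hx.eq_or_lt with h | h
  · simp [← h]
  · rw [if_pos h, Real.rpow_one]

lemma hg2 : ∀ x : ℝ, 0 ≤ x → x ^ (2:ℕ) = if 0 < x then x ^ (2:ℝ) else 0 := by
  intro x hx
  rcases hx.eq_or_lt with h | h
  · simp [← h]
  · rw [if_pos h, show (2:ℝ) = ((2:ℕ):ℝ) by norm_num, Real.rpow_natCast]

lemma hgi1 : ∀ x : ℝ, 0 ≤ x → x⁻¹ = if 0 < x then x ^ (-1:ℝ) else 0 := by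
  intro x hx
  rcases hx.eq_or_lt with h | h
  · simp [← h]
  · rw [if_pos h, Real.rpow_neg_one]

lemma hgi2 : ∀ x : ℝ, 0 ≤ x → (x⁻¹) ^ (2:ℕ) = if 0 < x then x ^ (-2:ℝ) else 0 := by
  intro x hx
  rcases hx.eq_or_lt with h | h
  · simp [← h]
  · rw [if_pos h, show (-2:ℝ) = -((2:ℕ):ℝ) by norm_num, Real.rpow_neg hx,
      Real.rpow_natCast, inv_pow]

lemma Gamma_half_pos {ν : ℝ} (hν0 : 0 < ν) : 0 < Real.Gamma (ν/2) :=
  Real.Gamma_pos_of_pos (by linarith)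

lemma chisq_m1 {ν : ℝ} (hν0 : 0 < ν) :
    ∫ x, x ∂(gammaMeasure (ν/2) (1/2)) = ν := by
  rw [chisq_val (by linarith) hν0 hg1, Real.rpow_one,
    Real.Gamma_add_one (by positivity)]
  field_simp [(Gamma_half_pos hν0).ne']

lemma chisq_m1_int {ν : ℝ} (hν0 : 0 < ν) :
    Integrable (fun x : ℝ => x) (gammaMeasure (ν/2) (1/2)) :=
  chisq_int (by linarith) hν0 hg1

lemma chisq_m2 {ν : ℝ} (hν0 : 0 < ν) :
    ∫ x, x ^ (2:ℕ) ∂(gammaMeasure (ν/2) (1/2)) = ν * (ν + 2) := by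
  rw [chisq_val (by linarith) hν0 hg2,
    show ν/2 + (2:ℝ) = (ν/2 + 1) + 1 by ring,
    Real.Gamma_add_one (by positivity), Real.Gamma_add_one (by positivity),
    show (2:ℝ)^(2:ℝ) = 4 by
      rw [show (2:ℝ) = ((2:ℕ):ℝ) by norm_num, Real.rpow_natCast]; norm_num]
  field_simp [(Gamma_half_pos hν0).ne']
  ring

lemma chisq_m2_int {ν : ℝ} (hν0 : 0 < ν) :
    Integrable (fun x : ℝ => x ^ (2:ℕ)) (gammaMeasure (ν/2) (1/2)) :=
  chisq_int (by linarith) hν0 hg2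

lemma chisq_im1 {ν : ℝ} (hν2 : 2 < ν) :
    ∫ x, x⁻¹ ∂(gammaMeasure (ν/2) (1/2)) = (ν - 2)⁻¹ := by
  have hν0 : 0 < ν := by linarith
  have h1 : Real.Gamma (ν/2) = (ν/2 - 1) * Real.Gamma (ν/2 - 1) := by
    rw [← Real.Gamma_add_one (by intro h; nlinarith [h])]
    · ring_nf
  rw [chisq_val (by linarith) hν0 hgi1, Real.rpow_neg_one,
    show ν/2 + (-1:ℝ) = ν/2 - 1 by ring, h1]
  have h2 : (0:ℝ) < Real.Gamma (ν/2 - 1) := Real.Gamma_pos_of_pos (by linarith)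
  rw [mul_comm (ν/2 - 1) (Real.Gamma (ν/2 - 1)), ← div_div, div_self h2.ne']
  have hB : ν/2 - 1 ≠ 0 := by intro h; nlinarith [h]
  field_simp

lemma chisq_im1_int {ν : ℝ} (hν2 : 2 < ν) :
    Integrable (fun x : ℝ => x⁻¹) (gammaMeasure (ν/2) (1/2)) :=
  chisq_int (by linarith) (by linarith) hgi1

lemma chisq_im2 {ν : ℝ} (hν4 : 4 < ν) :
    ∫ x, (x⁻¹) ^ (2:ℕ) ∂(gammaMeasure (ν/2) (1/2)) = ((ν - 2) * (ν - 4))⁻¹ := by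
  have hν0 : 0 < ν := by linarith
  have h2 : (0:ℝ) < Real.Gamma (ν/2 - 2) := Real.Gamma_pos_of_pos (by linarith)
  have h1 : Real.Gamma (ν/2) = (ν/2 - 1) * ((ν/2 - 2) * Real.Gamma (ν/2 - 2)) := by
    rw [← Real.Gamma_add_one (s := ν/2 - 2) (by intro h; nlinarith [h]),
      show ν/2 - 2 + 1 = ν/2 - 1 by ring,
      ← Real.Gamma_add_one (s := ν/2 - 1) (by intro h; nlinarith [h]),
      show ν/2 - 1 + 1 = ν/2 by ring]
  rw [chisq_val (by linarith) hν0 hgi2,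
    show ν/2 + (-2:ℝ) = ν/2 - 2 by ring, h1,
    show (2:ℝ)^(-2:ℝ) = 4⁻¹ by
      rw [show (-2:ℝ) = -((2:ℕ):ℝ) by norm_num, Real.rpow_neg (by norm_num),
        Real.rpow_natCast]; norm_num]
  rw [show (ν/2-1)*((ν/2-2)*Real.Gamma (ν/2-2)) = Real.Gamma (ν/2-2) * ((ν/2-1)*(ν/2-2)) by ring,
    ← div_div, div_self h2.ne']
  have hB1 : ν/2 - 1 ≠ 0 := by intro h; nlinarith [h]
  have hB2 : ν/2 - 2 ≠ 0 := by intro h; nlinarith [h]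
  field_simp
  norm_num

lemma chisq_im2_int {ν : ℝ} (hν4 : 4 < ν) :
    Integrable (fun x : ℝ => (x⁻¹) ^ (2:ℕ)) (gammaMeasure (ν/2) (1/2)) :=
  chisq_int (by linarith) (by linarith) hgi2



variable {v : ℝ≥0}

lemma vpos (hv : v ≠ 0) : (0:ℝ) < (v:ℝ) := NNReal.coe_pos.mpr (pos_iff_ne_zero.mpr hv)

lemma gauss_integral_eq (hv : v ≠ 0) (g : ℝ → ℝ) :
    ∫ x, g x ∂(gaussianReal 0 v) = ∫ x, gaussianPDFReal 0 v x * g x := by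
  rw [gaussianReal_of_var_ne_zero 0 hv]
  have h1 : (gaussianPDF 0 v) = fun x => ((Real.toNNReal (gaussianPDFReal 0 v x) : ℝ≥0) : ℝ≥0∞) := by
    rw [gaussianPDF_def]; rfl
  rw [h1, integral_withDensity_eq_integral_smul]
  · congr 1; funext x
    rw [NNReal.smul_def, Real.coe_toNNReal _ (gaussianPDFReal_nonneg 0 v x)]
    rfl
  · exact (measurable_gaussianPDFReal 0 v).real_toNNReal

lemma gauss_moment_integrable (hv : v ≠ 0) (k : ℕ) :
    Integrable (fun x : ℝ => x ^ k) (gaussianReal 0 v) := by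
  have hvp := vpos hv
  have hb : (0:ℝ) < (2*(v:ℝ))⁻¹ := by positivity
  rw [gaussianReal_of_var_ne_zero 0 hv,
    gaussianPDF_def 0 v,
    integrable_withDensity_iff_integrable_smul'
      ((measurable_gaussianPDFReal 0 v).ennreal_ofReal)
      (ae_of_all _ fun x => ENNReal.ofReal_lt_top)]
  have base : Integrable (fun x : ℝ => x ^ ((k:ℝ)) * Real.exp (-(2*(v:ℝ))⁻¹ * x^2)) :=
    integrable_rpow_mul_exp_neg_mul_sq hb (lt_of_lt_of_le neg_one_lt_zero (Nat.cast_nonneg k))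
  refine (base.const_mul ((Real.sqrt (2*π*(v:ℝ)))⁻¹)).congr (ae_of_all _ fun x => ?_)
  dsimp only
  rw [ENNReal.toReal_ofReal (gaussianPDFReal_nonneg 0 v x), smul_eq_mul, gaussianPDFReal,
    Real.rpow_natCast,
    show (-(x - 0)^2/(2*(v:ℝ))) = -((2*(v:ℝ))⁻¹ * x^2) by ring]
  ring

lemma gauss_odd_moment (hv : v ≠ 0) (k : ℕ) (hk : Odd k) :
    ∫ x, x ^ k ∂(gaussianReal 0 v) = 0 := by
  have h : (gaussianReal 0 v).map (fun x => (-1:ℝ) * x) = gaussianReal 0 v := by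
    have := gaussianReal_map_const_mul (μ := 0) (v := v) (-1:ℝ)
    rw [this]
    norm_num
  have h2 : ∫ x, x ^ k ∂(gaussianReal 0 v)
      = ∫ x, ((-1:ℝ) * x) ^ k ∂(gaussianReal 0 v) := by
    conv_lhs => rw [← h]
    rw [integral_map (measurable_const_mul (-1:ℝ)).aemeasurable
      (measurable_id'.pow_const k).aestronglyMeasurable]
  have h3 : ∫ x, ((-1:ℝ) * x) ^ k ∂(gaussianReal 0 v) = - ∫ x, x ^ k ∂(gaussianReal 0 v) := by
    rw [← integral_neg]
    congr 1; funext x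
    rw [show (-1:ℝ) * x = -x by ring, hk.neg_pow]
  rw [h3] at h2
  linarith

lemma gauss_even_aux (hv : v ≠ 0) (k : ℕ) (hk : Even k) :
    ∫ x, x ^ k ∂(gaussianReal 0 v)
      = (Real.sqrt (2*π*(v:ℝ)))⁻¹ * (((2*(v:ℝ))⁻¹) ^ (-(((k:ℝ)+1))/2)
          * Real.Gamma (((k:ℝ)+1)/2)) := by
  have hvp := vpos hv
  have hb : (0:ℝ) < (2*(v:ℝ))⁻¹ := by positivity
  rw [gauss_integral_eq hv]
  have h1 : (fun x : ℝ => gaussianPDFReal 0 v x * x ^ k)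
      = fun x => (fun t : ℝ => (Real.sqrt (2*π*(v:ℝ)))⁻¹
          * (t ^ k * Real.exp (-((2*(v:ℝ))⁻¹ * t^2)))) |x| := by
    funext x
    simp only
    rw [hk.pow_abs, sq_abs, gaussianPDFReal,
      show (-(x - 0)^2/(2*(v:ℝ))) = -((2*(v:ℝ))⁻¹ * x^2) by ring]
    ring
  have habs := integral_comp_abs (f := fun t : ℝ => (Real.sqrt (2*π*(v:ℝ)))⁻¹
          * (t ^ k * Real.exp (-((2*(v:ℝ))⁻¹ * t^2))))
  rw [h1, habs, integral_const_mul]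
  have h2 : ∀ x ∈ Ioi (0:ℝ), x ^ k * Real.exp (-((2*(v:ℝ))⁻¹ * x^2))
      = x ^ ((k:ℝ)) * Real.exp (-(2*(v:ℝ))⁻¹ * x ^ (2:ℝ)) := by
    intro x hx
    rw [Real.rpow_natCast, show ((2:ℝ)) = ((2:ℕ):ℝ) by norm_num, Real.rpow_natCast, neg_mul]
  rw [setIntegral_congr_fun measurableSet_Ioi h2,
    integral_rpow_mul_exp_neg_mul_rpow two_pos
      (lt_of_lt_of_le neg_one_lt_zero (Nat.cast_nonneg k)) hb]
  ring


variable {v : ℝ≥0}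

lemma sqrt_2piv (hv : v ≠ 0) :
    Real.sqrt (2*π*(v:ℝ)) = Real.sqrt (2*(v:ℝ)) * Real.sqrt π := by
  rw [show 2*π*(v:ℝ) = (2*(v:ℝ))*π by ring, Real.sqrt_mul (by positivity)]

lemma gauss_m2 (hv : v ≠ 0) : ∫ x, x ^ (2:ℕ) ∂(gaussianReal 0 v) = (v:ℝ) := by
  have hvp := vpos hv
  rw [gauss_even_aux hv 2 (by norm_num)]
  have e1 : (-((((2:ℕ):ℝ))+1))/2 = -((3:ℝ)/2) := by norm_num
  have e2 : ((((2:ℕ):ℝ))+1)/2 = (3:ℝ)/2 := by norm_num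
  rw [e1, e2]
  have e3 : ((2*(v:ℝ))⁻¹) ^ (-((3:ℝ)/2)) = (2*(v:ℝ)) ^ ((3:ℝ)/2) := by
    rw [Real.inv_rpow (by positivity), ← Real.rpow_neg (by positivity)]
    norm_num
  have e4 : (2*(v:ℝ)) ^ ((3:ℝ)/2) = 2*(v:ℝ) * Real.sqrt (2*(v:ℝ)) := by
    rw [show (3:ℝ)/2 = 1 + 1/2 by norm_num, Real.rpow_add (by positivity),
      Real.rpow_one, ← Real.sqrt_eq_rpow]
  have e5 : Real.Gamma ((3:ℝ)/2) = (1/2) * Real.sqrt π := by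
    rw [show (3:ℝ)/2 = 1/2 + 1 by norm_num, Real.Gamma_add_one (by norm_num),
      Real.Gamma_one_half_eq]
  rw [e3, e4, e5, sqrt_2piv hv]
  have s1 : Real.sqrt (2*(v:ℝ)) ≠ 0 := by positivity
  have s2 : Real.sqrt π ≠ 0 := by positivity
  field_simp

lemma gauss_m4 (hv : v ≠ 0) : ∫ x, x ^ (4:ℕ) ∂(gaussianReal 0 v) = 3 * (v:ℝ)^2 := by
  have hvp := vpos hv
  rw [gauss_even_aux hv 4 ⟨2, by norm_num⟩]
  have e1 : (-((((4:ℕ):ℝ))+1))/2 = -((5:ℝ)/2) := by norm_num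
  have e2 : ((((4:ℕ):ℝ))+1)/2 = (5:ℝ)/2 := by norm_num
  rw [e1, e2]
  have e3 : ((2*(v:ℝ))⁻¹) ^ (-((5:ℝ)/2)) = (2*(v:ℝ)) ^ ((5:ℝ)/2) := by
    rw [Real.inv_rpow (by positivity), ← Real.rpow_neg (by positivity)]
    norm_num
  have e4 : (2*(v:ℝ)) ^ ((5:ℝ)/2) = (2*(v:ℝ))^(2:ℕ) * Real.sqrt (2*(v:ℝ)) := by
    rw [show (5:ℝ)/2 = 2 + 1/2 by norm_num, Real.rpow_add (by positivity),
      ← Real.sqrt_eq_rpow, show ((2:ℝ)) = ((2:ℕ):ℝ) by norm_num, Real.rpow_natCast]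
  have e5 : Real.Gamma ((5:ℝ)/2) = (3/2) * ((1/2) * Real.sqrt π) := by
    rw [show (5:ℝ)/2 = 3/2 + 1 by norm_num, Real.Gamma_add_one (by norm_num),
      show (3:ℝ)/2 = 1/2 + 1 by norm_num, Real.Gamma_add_one (by norm_num),
      Real.Gamma_one_half_eq]
  rw [e3, e4, e5, sqrt_2piv hv]
  have s1 : Real.sqrt (2*(v:ℝ)) ≠ 0 := by positivity
  have s2 : Real.sqrt π ≠ 0 := by positivity
  field_simp


end S11
namespace S11
variable {Ω : Type*} [MeasurableSpace Ω] {P : MeasureTheory.Measure Ω}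

lemma omega_val {X : Ω → ℝ} (hX : Measurable X) {μ' : MeasureTheory.Measure ℝ}
    (hmap : P.map X = μ') {g : ℝ → ℝ} (hg : Measurable g) :
    ∫ ω, g (X ω) ∂P = ∫ x, g x ∂μ' := by
  rw [← hmap, MeasureTheory.integral_map hX.aemeasurable hg.aestronglyMeasurable]

lemma omega_int {X : Ω → ℝ} (hX : Measurable X) {μ' : MeasureTheory.Measure ℝ}
    (hmap : P.map X = μ') {g : ℝ → ℝ} (hg : Measurable g)
    (h : MeasureTheory.Integrable g μ') : MeasureTheory.Integrable (fun ω => g (X ω)) P := by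
  have h2 : MeasureTheory.Integrable g (P.map X) := by rwa [hmap]
  exact (MeasureTheory.integrable_map_measure hg.aestronglyMeasurable hX.aemeasurable).mp h2

lemma indep_pair {f : Fin 6 → Ω → ℝ}
    (hind : ProbabilityTheory.iIndepFun f P)
    (hmeas : ∀ i, Measurable (f i))
    {S T : Finset (Fin 6)} (hST : Disjoint S T)
    {φ : ((i : S) → ℝ) → ℝ} {ψ : ((i : T) → ℝ) → ℝ}
    (hφ : Measurable φ) (hψ : Measurable ψ) :
    ProbabilityTheory.IndepFun (fun ω => φ (fun i => f i ω)) (fun ω => ψ (fun i => f i ω)) P :=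
  (hind.indepFun_finset S T hST hmeas).comp hφ hψ

end S11

open MeasureTheory ProbabilityTheory NNReal

/-- variance of the single-imputation variance estimator under
posterior-draw imputation. -/
theorem stmt11
    {Ω : Type*} [MeasurableSpace Ω] (P : Measure Ω) [IsProbabilityMeasure P]
    (μ σ : ℝ) (hσ : 0 < σ)
    (n_obs n_mis : ℕ) (hnobs : 2 ≤ n_obs) (hnmis : 2 ≤ n_mis)
    (ν_prior : ℝ) (hνPD : 0 < (n_obs : ℝ) - 1 + ν_prior)
    (U_obs Z_obs U_PD Z_PD Z_imp U_imp : Ω → ℝ)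
    (hUmeas : Measurable U_obs) (hZmeas : Measurable Z_obs)
    (hUPDmeas : Measurable U_PD) (hZPDmeas : Measurable Z_PD)
    (hZimpmeas : Measurable Z_imp) (hUimpmeas : Measurable U_imp)
    (hU : P.map U_obs = gammaMeasure (((n_obs : ℝ) - 1) / 2) (1 / 2))
    (hZ : P.map Z_obs = gaussianReal 0 (1 / (n_obs : ℝ≥0)))
    (hUPD : P.map U_PD = gammaMeasure (((n_obs : ℝ) - 1 + ν_prior) / 2) (1 / 2))
    (hZPD : P.map Z_PD = gaussianReal 0 (1 / (n_obs : ℝ≥0)))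
    (hZimp : P.map Z_imp = gaussianReal 0 (1 / (n_mis : ℝ≥0)))
    (hUimp : P.map U_imp = gammaMeasure (((n_mis : ℝ) - 1) / 2) (1 / 2))
    (hindep : iIndepFun
      ![U_obs, Z_obs, U_PD, Z_PD, Z_imp, U_imp] P) :
    (n_obs : ℝ) - 1 + ν_prior > 4 →
      variance (fun ω => σ ^ 2 * (U_obs ω / (((n_obs : ℝ) + (n_mis : ℝ)) - 1))
          * (1 + (U_imp ω + ((n_mis : ℝ) * (n_obs : ℝ) / ((n_obs : ℝ) + (n_mis : ℝ)))
              * (Z_imp ω + Z_PD ω) ^ 2) / U_PD ω)) P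
        = σ ^ 4 * ((n_obs : ℝ) - 1) / (((n_obs : ℝ) + (n_mis : ℝ)) - 1) ^ 2
            * (((n_obs : ℝ) + 1)
                  * (1 + 2 * (n_mis : ℝ) / (((n_obs : ℝ) - 1 + ν_prior) - 2)
                      + (n_mis : ℝ) * ((n_mis : ℝ) + 2)
                          / ((((n_obs : ℝ) - 1 + ν_prior) - 2)
                              * (((n_obs : ℝ) - 1 + ν_prior) - 4)))
                - ((n_obs : ℝ) - 1)
                    * (1 + (n_mis : ℝ) / (((n_obs : ℝ) - 1 + ν_prior) - 2)) ^ 2) := by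
  intro hgt4
  have hno2 : (2:ℝ) ≤ (n_obs : ℝ) := by exact_mod_cast hnobs
  have hnm2 : (2:ℝ) ≤ (n_mis : ℝ) := by exact_mod_cast hnmis
  -- NNReal facts
  have hnoN : ((n_obs : ℝ≥0)) ≠ 0 := Nat.cast_ne_zero.mpr (by omega)
  have hnmN : ((n_mis : ℝ≥0)) ≠ 0 := Nat.cast_ne_zero.mpr (by omega)
  have hvO : (1 / (n_obs : ℝ≥0)) ≠ 0 := one_div_ne_zero hnoN
  have hvM : (1 / (n_mis : ℝ≥0)) ≠ 0 := one_div_ne_zero hnmN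
  have cvO : ((1 / (n_obs : ℝ≥0) : ℝ≥0) : ℝ) = 1 / (n_obs : ℝ) := by
    rw [NNReal.coe_div, NNReal.coe_one, NNReal.coe_natCast]
  have cvM : ((1 / (n_mis : ℝ≥0) : ℝ≥0) : ℝ) = 1 / (n_mis : ℝ) := by
    rw [NNReal.coe_div, NNReal.coe_one, NNReal.coe_natCast]
  -- measurability
  have hmv : ∀ i, Measurable (![U_obs, Z_obs, U_PD, Z_PD, Z_imp, U_imp] i) := by
    intro i; fin_cases i <;> assumption
  have mW : Measurable (fun ω => (U_imp ω + ((n_mis : ℝ) * (n_obs : ℝ) / ((n_obs : ℝ) + (n_mis : ℝ))) * (Z_imp ω + Z_PD ω) ^ 2)) := by fun_prop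
  have mV : Measurable (fun ω => (U_PD ω)⁻¹) := by fun_prop
  have mWV : Measurable (fun ω => (U_imp ω + ((n_mis : ℝ) * (n_obs : ℝ) / ((n_obs : ℝ) + (n_mis : ℝ))) * (Z_imp ω + Z_PD ω) ^ 2) * (U_PD ω)⁻¹) := by fun_prop
  have mWV2 : Measurable (fun ω => ((U_imp ω + ((n_mis : ℝ) * (n_obs : ℝ) / ((n_obs : ℝ) + (n_mis : ℝ))) * (Z_imp ω + Z_PD ω) ^ 2) * (U_PD ω)⁻¹) ^ 2) := by fun_prop
  have mY : Measurable (fun ω => U_obs ω * (1 + ((U_imp ω + ((n_mis : ℝ) * (n_obs : ℝ) / ((n_obs : ℝ) + (n_mis : ℝ))) * (Z_imp ω + Z_PD ω) ^ 2) * (U_PD ω)⁻¹))) := by fun_prop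
  -- independence
  have Izz : IndepFun Z_imp Z_PD P := hindep.indepFun (show (4 : Fin 6) ≠ 3 by decide)
  have Izzp : ∀ k l : ℕ, IndepFun (fun ω => Z_imp ω ^ k) (fun ω => Z_PD ω ^ l) P :=
    fun k l => Izz.comp (measurable_id'.pow_const k) (measurable_id'.pow_const l)
  have A1 : IndepFun U_obs (fun ω => (U_imp ω + ((n_mis : ℝ) * (n_obs : ℝ) / ((n_obs : ℝ) + (n_mis : ℝ))) * (Z_imp ω + Z_PD ω) ^ 2) * (U_PD ω)⁻¹) P :=
    S11.indep_pair hindep hmv (S := {0}) (T := {2,3,4,5}) (by decide)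
      (φ := fun p => p ⟨0, by decide⟩)
      (ψ := fun p => (p ⟨5, by decide⟩ + ((n_mis : ℝ) * (n_obs : ℝ) / ((n_obs : ℝ) + (n_mis : ℝ))) * (p ⟨4, by decide⟩ + p ⟨3, by decide⟩) ^ 2)
        * (p ⟨2, by decide⟩)⁻¹) (by fun_prop) (by fun_prop)
  have A2 : IndepFun (fun ω => U_obs ω ^ 2) (fun ω => (U_imp ω + ((n_mis : ℝ) * (n_obs : ℝ) / ((n_obs : ℝ) + (n_mis : ℝ))) * (Z_imp ω + Z_PD ω) ^ 2) * (U_PD ω)⁻¹) P :=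
    S11.indep_pair hindep hmv (S := {0}) (T := {2,3,4,5}) (by decide)
      (φ := fun p => (p ⟨0, by decide⟩) ^ 2)
      (ψ := fun p => (p ⟨5, by decide⟩ + ((n_mis : ℝ) * (n_obs : ℝ) / ((n_obs : ℝ) + (n_mis : ℝ))) * (p ⟨4, by decide⟩ + p ⟨3, by decide⟩) ^ 2)
        * (p ⟨2, by decide⟩)⁻¹) (by fun_prop) (by fun_prop)
  have A3 : IndepFun (fun ω => U_obs ω ^ 2) (fun ω => ((U_imp ω + ((n_mis : ℝ) * (n_obs : ℝ) / ((n_obs : ℝ) + (n_mis : ℝ))) * (Z_imp ω + Z_PD ω) ^ 2) * (U_PD ω)⁻¹) ^ 2) P :=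
    S11.indep_pair hindep hmv (S := {0}) (T := {2,3,4,5}) (by decide)
      (φ := fun p => (p ⟨0, by decide⟩) ^ 2)
      (ψ := fun p => ((p ⟨5, by decide⟩ + ((n_mis : ℝ) * (n_obs : ℝ) / ((n_obs : ℝ) + (n_mis : ℝ))) * (p ⟨4, by decide⟩ + p ⟨3, by decide⟩) ^ 2)
        * (p ⟨2, by decide⟩)⁻¹) ^ 2) (by fun_prop) (by fun_prop)
  have B1 : IndepFun (fun ω => (U_imp ω + ((n_mis : ℝ) * (n_obs : ℝ) / ((n_obs : ℝ) + (n_mis : ℝ))) * (Z_imp ω + Z_PD ω) ^ 2)) (fun ω => (U_PD ω)⁻¹) P :=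
    S11.indep_pair hindep hmv (S := {3,4,5}) (T := {2}) (by decide)
      (φ := fun p => p ⟨5, by decide⟩ + ((n_mis : ℝ) * (n_obs : ℝ) / ((n_obs : ℝ) + (n_mis : ℝ))) * (p ⟨4, by decide⟩ + p ⟨3, by decide⟩) ^ 2)
      (ψ := fun p => (p ⟨2, by decide⟩)⁻¹) (by fun_prop) (by fun_prop)
  have B2 : IndepFun (fun ω => (U_imp ω + ((n_mis : ℝ) * (n_obs : ℝ) / ((n_obs : ℝ) + (n_mis : ℝ))) * (Z_imp ω + Z_PD ω) ^ 2) ^ 2) (fun ω => ((U_PD ω)⁻¹) ^ 2) P :=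
    S11.indep_pair hindep hmv (S := {3,4,5}) (T := {2}) (by decide)
      (φ := fun p => (p ⟨5, by decide⟩ + ((n_mis : ℝ) * (n_obs : ℝ) / ((n_obs : ℝ) + (n_mis : ℝ))) * (p ⟨4, by decide⟩ + p ⟨3, by decide⟩) ^ 2) ^ 2)
      (ψ := fun p => ((p ⟨2, by decide⟩)⁻¹) ^ 2) (by fun_prop) (by fun_prop)
  have C1 : IndepFun U_imp (fun ω => (Z_imp ω + Z_PD ω) ^ 2) P :=
    S11.indep_pair hindep hmv (S := {5}) (T := {3,4}) (by decide)
      (φ := fun p => p ⟨5, by decide⟩)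
      (ψ := fun p => (p ⟨4, by decide⟩ + p ⟨3, by decide⟩) ^ 2) (by fun_prop) (by fun_prop)
  -- moments of the chi-square variables
  have EU1 : ∫ ω, U_obs ω ∂P = (n_obs : ℝ) - 1 :=
    (S11.omega_val (g := fun x => x) hUmeas hU measurable_id).trans
      (S11.chisq_m1 (by linarith))
  have IU1 : Integrable U_obs P :=
    S11.omega_int (g := fun x => x) hUmeas hU measurable_id (S11.chisq_m1_int (by linarith))
  have EU2 : ∫ ω, U_obs ω ^ 2 ∂P = ((n_obs : ℝ) - 1) * (((n_obs : ℝ) - 1) + 2) :=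
    (S11.omega_val (g := fun x => x ^ 2) hUmeas hU (measurable_id'.pow_const 2)).trans
      (S11.chisq_m2 (by linarith))
  have IU2 : Integrable (fun ω => U_obs ω ^ 2) P :=
    S11.omega_int (g := fun x => x ^ 2) hUmeas hU (measurable_id'.pow_const 2)
      (S11.chisq_m2_int (by linarith))
  have EV1 : ∫ ω, (U_PD ω)⁻¹ ∂P = (((n_obs : ℝ) - 1 + ν_prior) - 2)⁻¹ :=
    (S11.omega_val (g := fun x => x⁻¹) hUPDmeas hUPD measurable_inv).trans
      (S11.chisq_im1 (by linarith))
  have IV1 : Integrable (fun ω => (U_PD ω)⁻¹) P :=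
    S11.omega_int (g := fun x => x⁻¹) hUPDmeas hUPD measurable_inv
      (S11.chisq_im1_int (by linarith))
  have EV2 : ∫ ω, ((U_PD ω)⁻¹) ^ 2 ∂P = ((((n_obs : ℝ) - 1 + ν_prior) - 2) * (((n_obs : ℝ) - 1 + ν_prior) - 4))⁻¹ :=
    (S11.omega_val (g := fun x => (x⁻¹) ^ 2) hUPDmeas hUPD (measurable_inv.pow_const 2)).trans
      (S11.chisq_im2 (by linarith))
  have IV2 : Integrable (fun ω => ((U_PD ω)⁻¹) ^ 2) P :=
    S11.omega_int (g := fun x => (x⁻¹) ^ 2) hUPDmeas hUPD (measurable_inv.pow_const 2)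
      (S11.chisq_im2_int (by linarith))
  have EM1 : ∫ ω, U_imp ω ∂P = (n_mis : ℝ) - 1 :=
    (S11.omega_val (g := fun x => x) hUimpmeas hUimp measurable_id).trans
      (S11.chisq_m1 (by linarith))
  have IM1 : Integrable U_imp P :=
    S11.omega_int (g := fun x => x) hUimpmeas hUimp measurable_id (S11.chisq_m1_int (by linarith))
  have EM2 : ∫ ω, U_imp ω ^ 2 ∂P = ((n_mis : ℝ) - 1) * (((n_mis : ℝ) - 1) + 2) :=
    (S11.omega_val (g := fun x => x ^ 2) hUimpmeas hUimp (measurable_id'.pow_const 2)).trans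
      (S11.chisq_m2 (by linarith))
  have IM2 : Integrable (fun ω => U_imp ω ^ 2) P :=
    S11.omega_int (g := fun x => x ^ 2) hUimpmeas hUimp (measurable_id'.pow_const 2)
      (S11.chisq_m2_int (by linarith))
  -- gaussian moments
  have EZp1 : ∫ ω, Z_PD ω ^ 1 ∂P = 0 :=
    (S11.omega_val (g := fun x => x ^ 1) hZPDmeas hZPD (measurable_id'.pow_const 1)).trans
      (S11.gauss_odd_moment hvO 1 (by decide))
  have EZp3 : ∫ ω, Z_PD ω ^ 3 ∂P = 0 :=
    (S11.omega_val (g := fun x => x ^ 3) hZPDmeas hZPD (measurable_id'.pow_const 3)).trans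
      (S11.gauss_odd_moment hvO 3 (by decide))
  have EZp2 : ∫ ω, Z_PD ω ^ 2 ∂P = 1 / (n_obs : ℝ) :=
    (S11.omega_val (g := fun x => x ^ 2) hZPDmeas hZPD (measurable_id'.pow_const 2)).trans
      ((S11.gauss_m2 hvO).trans cvO)
  have EZp4 : ∫ ω, Z_PD ω ^ 4 ∂P = 3 * (1 / (n_obs : ℝ)) ^ 2 :=
    (S11.omega_val (g := fun x => x ^ 4) hZPDmeas hZPD (measurable_id'.pow_const 4)).trans
      ((S11.gauss_m4 hvO).trans (by rw [cvO]))
  have EZi1 : ∫ ω, Z_imp ω ^ 1 ∂P = 0 :=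
    (S11.omega_val (g := fun x => x ^ 1) hZimpmeas hZimp (measurable_id'.pow_const 1)).trans
      (S11.gauss_odd_moment hvM 1 (by decide))
  have EZi3 : ∫ ω, Z_imp ω ^ 3 ∂P = 0 :=
    (S11.omega_val (g := fun x => x ^ 3) hZimpmeas hZimp (measurable_id'.pow_const 3)).trans
      (S11.gauss_odd_moment hvM 3 (by decide))
  have EZi2 : ∫ ω, Z_imp ω ^ 2 ∂P = 1 / (n_mis : ℝ) :=
    (S11.omega_val (g := fun x => x ^ 2) hZimpmeas hZimp (measurable_id'.pow_const 2)).trans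
      ((S11.gauss_m2 hvM).trans cvM)
  have EZi4 : ∫ ω, Z_imp ω ^ 4 ∂P = 3 * (1 / (n_mis : ℝ)) ^ 2 :=
    (S11.omega_val (g := fun x => x ^ 4) hZimpmeas hZimp (measurable_id'.pow_const 4)).trans
      ((S11.gauss_m4 hvM).trans (by rw [cvM]))
  have IZp : ∀ k : ℕ, Integrable (fun ω => Z_PD ω ^ k) P := fun k =>
    S11.omega_int (g := fun x => x ^ k) hZPDmeas hZPD (measurable_id'.pow_const k)
      (S11.gauss_moment_integrable hvO k)
  have IZi : ∀ k : ℕ, Integrable (fun ω => Z_imp ω ^ k) P := fun k =>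
    S11.omega_int (g := fun x => x ^ k) hZimpmeas hZimp (measurable_id'.pow_const k)
      (S11.gauss_moment_integrable hvM k)
  -- S = Z_imp + Z_PD moments
  have hS2 : (fun ω => (Z_imp ω + Z_PD ω) ^ 2)
      = fun ω => (Z_imp ω ^ 2 + 2 * (Z_imp ω ^ 1 * Z_PD ω ^ 1)) + Z_PD ω ^ 2 := by
    funext ω; ring
  have IS2 : Integrable (fun ω => (Z_imp ω + Z_PD ω) ^ 2) P := by
    rw [hS2]
    exact ((IZi 2).add (((Izzp 1 1).integrable_mul (IZi 1) (IZp 1)).const_mul 2)).add (IZp 2)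
  have K1 : Integrable (fun ω => Z_imp ω ^ 1 * Z_PD ω ^ 1) P :=
    (Izzp 1 1).integrable_mul (IZi 1) (IZp 1)
  have K2 : Integrable (fun ω => 2 * (Z_imp ω ^ 1 * Z_PD ω ^ 1)) P := K1.const_mul 2
  have K3 : Integrable (fun ω => Z_imp ω ^ 2 + 2 * (Z_imp ω ^ 1 * Z_PD ω ^ 1)) P := (IZi 2).add K2
  have ES2 : ∫ ω, (Z_imp ω + Z_PD ω) ^ 2 ∂P = 1 / (n_mis : ℝ) + 1 / (n_obs : ℝ) := by
    rw [hS2,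
      integral_add K3 (IZp 2),
      integral_add (IZi 2) K2,
      integral_const_mul,
      (Izzp 1 1).integral_fun_mul_eq_mul_integral ((hZimpmeas.pow_const 1).aestronglyMeasurable)
        ((hZPDmeas.pow_const 1).aestronglyMeasurable),
      EZi1, EZp1, EZi2, EZp2]
    ring
  have hS4 : (fun ω => (Z_imp ω + Z_PD ω) ^ 4)
      = fun ω => (((Z_imp ω ^ 4 + 4 * (Z_imp ω ^ 3 * Z_PD ω ^ 1))
          + 6 * (Z_imp ω ^ 2 * Z_PD ω ^ 2)) + 4 * (Z_imp ω ^ 1 * Z_PD ω ^ 3)) + Z_PD ω ^ 4 := by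
    funext ω; ring
  have IS4 : Integrable (fun ω => (Z_imp ω + Z_PD ω) ^ 4) P := by
    rw [hS4]
    exact ((((IZi 4).add (((Izzp 3 1).integrable_mul (IZi 3) (IZp 1)).const_mul 4)).add
      (((Izzp 2 2).integrable_mul (IZi 2) (IZp 2)).const_mul 6)).add
      (((Izzp 1 3).integrable_mul (IZi 1) (IZp 3)).const_mul 4)).add (IZp 4)
  have L31 : Integrable (fun ω => 4 * (Z_imp ω ^ 3 * Z_PD ω ^ 1)) P :=
    ((Izzp 3 1).integrable_mul (IZi 3) (IZp 1)).const_mul 4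
  have L22 : Integrable (fun ω => 6 * (Z_imp ω ^ 2 * Z_PD ω ^ 2)) P :=
    ((Izzp 2 2).integrable_mul (IZi 2) (IZp 2)).const_mul 6
  have L13 : Integrable (fun ω => 4 * (Z_imp ω ^ 1 * Z_PD ω ^ 3)) P :=
    ((Izzp 1 3).integrable_mul (IZi 1) (IZp 3)).const_mul 4
  have M1 : Integrable (fun ω => Z_imp ω ^ 4 + 4 * (Z_imp ω ^ 3 * Z_PD ω ^ 1)) P :=
    (IZi 4).add L31
  have M2 : Integrable (fun ω => (Z_imp ω ^ 4 + 4 * (Z_imp ω ^ 3 * Z_PD ω ^ 1))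
      + 6 * (Z_imp ω ^ 2 * Z_PD ω ^ 2)) P := M1.add L22
  have M3 : Integrable (fun ω => ((Z_imp ω ^ 4 + 4 * (Z_imp ω ^ 3 * Z_PD ω ^ 1))
      + 6 * (Z_imp ω ^ 2 * Z_PD ω ^ 2)) + 4 * (Z_imp ω ^ 1 * Z_PD ω ^ 3)) P := M2.add L13
  have ES4 : ∫ ω, (Z_imp ω + Z_PD ω) ^ 4 ∂P
      = 3 * (1 / (n_mis : ℝ)) ^ 2 + 6 * ((1 / (n_mis : ℝ)) * (1 / (n_obs : ℝ))) + 3 * (1 / (n_obs : ℝ)) ^ 2 := by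
    rw [hS4,
      integral_add M3 (IZp 4),
      integral_add M2 L13,
      integral_add M1 L22,
      integral_add (IZi 4) L31,
      integral_const_mul, integral_const_mul, integral_const_mul,
      (Izzp 3 1).integral_fun_mul_eq_mul_integral ((hZimpmeas.pow_const 3).aestronglyMeasurable)
        ((hZPDmeas.pow_const 1).aestronglyMeasurable),
      (Izzp 2 2).integral_fun_mul_eq_mul_integral ((hZimpmeas.pow_const 2).aestronglyMeasurable)
        ((hZPDmeas.pow_const 2).aestronglyMeasurable),
      (Izzp 1 3).integral_fun_mul_eq_mul_integral ((hZimpmeas.pow_const 1).aestronglyMeasurable)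
        ((hZPDmeas.pow_const 3).aestronglyMeasurable),
      EZi1, EZi2, EZi3, EZi4, EZp1, EZp2, EZp3, EZp4]
    ring
  -- W moments
  have IW1 : Integrable (fun ω => (U_imp ω + ((n_mis : ℝ) * (n_obs : ℝ) / ((n_obs : ℝ) + (n_mis : ℝ))) * (Z_imp ω + Z_PD ω) ^ 2)) P := IM1.add (IS2.const_mul ((n_mis : ℝ) * (n_obs : ℝ) / ((n_obs : ℝ) + (n_mis : ℝ))))
  have KW : Integrable (fun ω => ((n_mis : ℝ) * (n_obs : ℝ) / ((n_obs : ℝ) + (n_mis : ℝ))) * (Z_imp ω + Z_PD ω) ^ 2) P := IS2.const_mul ((n_mis : ℝ) * (n_obs : ℝ) / ((n_obs : ℝ) + (n_mis : ℝ)))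
  have EW : ∫ ω, (U_imp ω + ((n_mis : ℝ) * (n_obs : ℝ) / ((n_obs : ℝ) + (n_mis : ℝ))) * (Z_imp ω + Z_PD ω) ^ 2) ∂P = ((n_mis : ℝ) - 1) + ((n_mis : ℝ) * (n_obs : ℝ) / ((n_obs : ℝ) + (n_mis : ℝ))) * (1 / (n_mis : ℝ) + 1 / (n_obs : ℝ)) := by
    rw [integral_add IM1 KW, integral_const_mul, EM1, ES2]
  have IUS2 : Integrable (fun ω => U_imp ω * (Z_imp ω + Z_PD ω) ^ 2) P := C1.integrable_mul IM1 IS2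
  have hW2 : (fun ω => (U_imp ω + ((n_mis : ℝ) * (n_obs : ℝ) / ((n_obs : ℝ) + (n_mis : ℝ))) * (Z_imp ω + Z_PD ω) ^ 2) ^ 2)
      = fun ω => (U_imp ω ^ 2 + (2 * ((n_mis : ℝ) * (n_obs : ℝ) / ((n_obs : ℝ) + (n_mis : ℝ)))) * (U_imp ω * (Z_imp ω + Z_PD ω) ^ 2)) + ((n_mis : ℝ) * (n_obs : ℝ) / ((n_obs : ℝ) + (n_mis : ℝ))) ^ 2 * (Z_imp ω + Z_PD ω) ^ 4 := by
    funext ω; ring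
  have IW2 : Integrable (fun ω => (U_imp ω + ((n_mis : ℝ) * (n_obs : ℝ) / ((n_obs : ℝ) + (n_mis : ℝ))) * (Z_imp ω + Z_PD ω) ^ 2) ^ 2) P := by
    rw [hW2]
    exact (IM2.add (IUS2.const_mul (2 * ((n_mis : ℝ) * (n_obs : ℝ) / ((n_obs : ℝ) + (n_mis : ℝ)))))).add (IS4.const_mul (((n_mis : ℝ) * (n_obs : ℝ) / ((n_obs : ℝ) + (n_mis : ℝ))) ^ 2))
  have EW2 : ∫ ω, (U_imp ω + ((n_mis : ℝ) * (n_obs : ℝ) / ((n_obs : ℝ) + (n_mis : ℝ))) * (Z_imp ω + Z_PD ω) ^ 2) ^ 2 ∂P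
      = (((n_mis : ℝ) - 1) * (((n_mis : ℝ) - 1) + 2) + (2 * ((n_mis : ℝ) * (n_obs : ℝ) / ((n_obs : ℝ) + (n_mis : ℝ)))) * (((n_mis : ℝ) - 1) * (1 / (n_mis : ℝ) + 1 / (n_obs : ℝ))))
        + ((n_mis : ℝ) * (n_obs : ℝ) / ((n_obs : ℝ) + (n_mis : ℝ))) ^ 2 * (3 * (1 / (n_mis : ℝ)) ^ 2 + 6 * ((1 / (n_mis : ℝ)) * (1 / (n_obs : ℝ))) + 3 * (1 / (n_obs : ℝ)) ^ 2) := by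
    have N2 : Integrable (fun ω => (2 * ((n_mis : ℝ) * (n_obs : ℝ) / ((n_obs : ℝ) + (n_mis : ℝ)))) * (U_imp ω * (Z_imp ω + Z_PD ω) ^ 2)) P :=
      IUS2.const_mul (2 * ((n_mis : ℝ) * (n_obs : ℝ) / ((n_obs : ℝ) + (n_mis : ℝ))))
    have N3 : Integrable (fun ω => U_imp ω ^ 2 + (2 * ((n_mis : ℝ) * (n_obs : ℝ) / ((n_obs : ℝ) + (n_mis : ℝ)))) * (U_imp ω * (Z_imp ω + Z_PD ω) ^ 2)) P :=
      IM2.add N2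
    have N4 : Integrable (fun ω => ((n_mis : ℝ) * (n_obs : ℝ) / ((n_obs : ℝ) + (n_mis : ℝ))) ^ 2 * (Z_imp ω + Z_PD ω) ^ 4) P := IS4.const_mul (((n_mis : ℝ) * (n_obs : ℝ) / ((n_obs : ℝ) + (n_mis : ℝ))) ^ 2)
    rw [hW2,
      integral_add N3 N4,
      integral_add IM2 N2,
      integral_const_mul, integral_const_mul,
      C1.integral_fun_mul_eq_mul_integral hUimpmeas.aestronglyMeasurable (by fun_prop : Measurable (fun ω => (Z_imp ω + Z_PD ω) ^ 2)).aestronglyMeasurable,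
      EM1, EM2, ES2, ES4]
  -- W*V moments
  have IWV : Integrable (fun ω => (U_imp ω + ((n_mis : ℝ) * (n_obs : ℝ) / ((n_obs : ℝ) + (n_mis : ℝ))) * (Z_imp ω + Z_PD ω) ^ 2) * (U_PD ω)⁻¹) P := B1.integrable_mul IW1 IV1
  have EWV : ∫ ω, (U_imp ω + ((n_mis : ℝ) * (n_obs : ℝ) / ((n_obs : ℝ) + (n_mis : ℝ))) * (Z_imp ω + Z_PD ω) ^ 2) * (U_PD ω)⁻¹ ∂P
      = (((n_mis : ℝ) - 1) + ((n_mis : ℝ) * (n_obs : ℝ) / ((n_obs : ℝ) + (n_mis : ℝ))) * (1 / (n_mis : ℝ) + 1 / (n_obs : ℝ))) * (((n_obs : ℝ) - 1 + ν_prior) - 2)⁻¹ := by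
    rw [B1.integral_fun_mul_eq_mul_integral mW.aestronglyMeasurable mV.aestronglyMeasurable, EW, EV1]
  have hWV2 : (fun ω => ((U_imp ω + ((n_mis : ℝ) * (n_obs : ℝ) / ((n_obs : ℝ) + (n_mis : ℝ))) * (Z_imp ω + Z_PD ω) ^ 2) * (U_PD ω)⁻¹) ^ 2) = fun ω => (U_imp ω + ((n_mis : ℝ) * (n_obs : ℝ) / ((n_obs : ℝ) + (n_mis : ℝ))) * (Z_imp ω + Z_PD ω) ^ 2) ^ 2 * ((U_PD ω)⁻¹) ^ 2 := by
    funext ω; ring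
  have IWV2 : Integrable (fun ω => ((U_imp ω + ((n_mis : ℝ) * (n_obs : ℝ) / ((n_obs : ℝ) + (n_mis : ℝ))) * (Z_imp ω + Z_PD ω) ^ 2) * (U_PD ω)⁻¹) ^ 2) P := by
    rw [hWV2]; exact B2.integrable_mul IW2 IV2
  have EWV2 : ∫ ω, ((U_imp ω + ((n_mis : ℝ) * (n_obs : ℝ) / ((n_obs : ℝ) + (n_mis : ℝ))) * (Z_imp ω + Z_PD ω) ^ 2) * (U_PD ω)⁻¹) ^ 2 ∂P
      = ((((n_mis : ℝ) - 1) * (((n_mis : ℝ) - 1) + 2) + (2 * ((n_mis : ℝ) * (n_obs : ℝ) / ((n_obs : ℝ) + (n_mis : ℝ)))) * (((n_mis : ℝ) - 1) * (1 / (n_mis : ℝ) + 1 / (n_obs : ℝ))))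
          + ((n_mis : ℝ) * (n_obs : ℝ) / ((n_obs : ℝ) + (n_mis : ℝ))) ^ 2 * (3 * (1 / (n_mis : ℝ)) ^ 2 + 6 * ((1 / (n_mis : ℝ)) * (1 / (n_obs : ℝ))) + 3 * (1 / (n_obs : ℝ)) ^ 2))
        * ((((n_obs : ℝ) - 1 + ν_prior) - 2) * (((n_obs : ℝ) - 1 + ν_prior) - 4))⁻¹ := by
    rw [hWV2,
      B2.integral_fun_mul_eq_mul_integral (by fun_prop : Measurable (fun ω => (U_imp ω + ((n_mis : ℝ) * (n_obs : ℝ) / ((n_obs : ℝ) + (n_mis : ℝ))) * (Z_imp ω + Z_PD ω) ^ 2) ^ 2)).aestronglyMeasurable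
        (by fun_prop : Measurable (fun ω => ((U_PD ω)⁻¹) ^ 2)).aestronglyMeasurable,
      EW2, EV2]
  -- Y moments
  have hY1 : (fun ω => U_obs ω * (1 + ((U_imp ω + ((n_mis : ℝ) * (n_obs : ℝ) / ((n_obs : ℝ) + (n_mis : ℝ))) * (Z_imp ω + Z_PD ω) ^ 2) * (U_PD ω)⁻¹))) = fun ω => U_obs ω + U_obs ω * ((U_imp ω + ((n_mis : ℝ) * (n_obs : ℝ) / ((n_obs : ℝ) + (n_mis : ℝ))) * (Z_imp ω + Z_PD ω) ^ 2) * (U_PD ω)⁻¹) := by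
    funext ω; ring
  have IUWV : Integrable (fun ω => U_obs ω * ((U_imp ω + ((n_mis : ℝ) * (n_obs : ℝ) / ((n_obs : ℝ) + (n_mis : ℝ))) * (Z_imp ω + Z_PD ω) ^ 2) * (U_PD ω)⁻¹)) P := A1.integrable_mul IU1 IWV
  have EY : ∫ ω, U_obs ω * (1 + ((U_imp ω + ((n_mis : ℝ) * (n_obs : ℝ) / ((n_obs : ℝ) + (n_mis : ℝ))) * (Z_imp ω + Z_PD ω) ^ 2) * (U_PD ω)⁻¹)) ∂P
      = ((n_obs : ℝ) - 1) + ((n_obs : ℝ) - 1) * ((((n_mis : ℝ) - 1) + ((n_mis : ℝ) * (n_obs : ℝ) / ((n_obs : ℝ) + (n_mis : ℝ))) * (1 / (n_mis : ℝ) + 1 / (n_obs : ℝ))) * (((n_obs : ℝ) - 1 + ν_prior) - 2)⁻¹) := by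
    rw [hY1, integral_add IU1 IUWV,
      A1.integral_fun_mul_eq_mul_integral hUmeas.aestronglyMeasurable mWV.aestronglyMeasurable, EU1, EWV]
  have hY2 : (fun ω => (U_obs ω * (1 + ((U_imp ω + ((n_mis : ℝ) * (n_obs : ℝ) / ((n_obs : ℝ) + (n_mis : ℝ))) * (Z_imp ω + Z_PD ω) ^ 2) * (U_PD ω)⁻¹))) ^ 2)
      = fun ω => (U_obs ω ^ 2 + 2 * (U_obs ω ^ 2 * ((U_imp ω + ((n_mis : ℝ) * (n_obs : ℝ) / ((n_obs : ℝ) + (n_mis : ℝ))) * (Z_imp ω + Z_PD ω) ^ 2) * (U_PD ω)⁻¹))) + U_obs ω ^ 2 * (((U_imp ω + ((n_mis : ℝ) * (n_obs : ℝ) / ((n_obs : ℝ) + (n_mis : ℝ))) * (Z_imp ω + Z_PD ω) ^ 2) * (U_PD ω)⁻¹) ^ 2) := by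
    funext ω; ring
  have IU2WV : Integrable (fun ω => U_obs ω ^ 2 * ((U_imp ω + ((n_mis : ℝ) * (n_obs : ℝ) / ((n_obs : ℝ) + (n_mis : ℝ))) * (Z_imp ω + Z_PD ω) ^ 2) * (U_PD ω)⁻¹)) P := A2.integrable_mul IU2 IWV
  have IU2WV2 : Integrable (fun ω => U_obs ω ^ 2 * (((U_imp ω + ((n_mis : ℝ) * (n_obs : ℝ) / ((n_obs : ℝ) + (n_mis : ℝ))) * (Z_imp ω + Z_PD ω) ^ 2) * (U_PD ω)⁻¹) ^ 2)) P := A3.integrable_mul IU2 IWV2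
  have IY2 : Integrable (fun ω => (U_obs ω * (1 + ((U_imp ω + ((n_mis : ℝ) * (n_obs : ℝ) / ((n_obs : ℝ) + (n_mis : ℝ))) * (Z_imp ω + Z_PD ω) ^ 2) * (U_PD ω)⁻¹))) ^ 2) P := by
    rw [hY2]
    exact (IU2.add (IU2WV.const_mul 2)).add IU2WV2
  have EY2 : ∫ ω, (U_obs ω * (1 + ((U_imp ω + ((n_mis : ℝ) * (n_obs : ℝ) / ((n_obs : ℝ) + (n_mis : ℝ))) * (Z_imp ω + Z_PD ω) ^ 2) * (U_PD ω)⁻¹))) ^ 2 ∂P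
      = (((n_obs : ℝ) - 1) * (((n_obs : ℝ) - 1) + 2)
          + 2 * (((n_obs : ℝ) - 1) * (((n_obs : ℝ) - 1) + 2)
            * ((((n_mis : ℝ) - 1) + ((n_mis : ℝ) * (n_obs : ℝ) / ((n_obs : ℝ) + (n_mis : ℝ))) * (1 / (n_mis : ℝ) + 1 / (n_obs : ℝ))) * (((n_obs : ℝ) - 1 + ν_prior) - 2)⁻¹)))
        + ((n_obs : ℝ) - 1) * (((n_obs : ℝ) - 1) + 2)
          * (((((n_mis : ℝ) - 1) * (((n_mis : ℝ) - 1) + 2) + (2 * ((n_mis : ℝ) * (n_obs : ℝ) / ((n_obs : ℝ) + (n_mis : ℝ)))) * (((n_mis : ℝ) - 1) * (1 / (n_mis : ℝ) + 1 / (n_obs : ℝ))))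
              + ((n_mis : ℝ) * (n_obs : ℝ) / ((n_obs : ℝ) + (n_mis : ℝ))) ^ 2 * (3 * (1 / (n_mis : ℝ)) ^ 2 + 6 * ((1 / (n_mis : ℝ)) * (1 / (n_obs : ℝ))) + 3 * (1 / (n_obs : ℝ)) ^ 2))
            * ((((n_obs : ℝ) - 1 + ν_prior) - 2) * (((n_obs : ℝ) - 1 + ν_prior) - 4))⁻¹) := by
    have Q2 : Integrable (fun ω => 2 * (U_obs ω ^ 2 * ((U_imp ω + ((n_mis : ℝ) * (n_obs : ℝ) / ((n_obs : ℝ) + (n_mis : ℝ))) * (Z_imp ω + Z_PD ω) ^ 2) * (U_PD ω)⁻¹))) P := IU2WV.const_mul 2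
    have Q3 : Integrable (fun ω => U_obs ω ^ 2 + 2 * (U_obs ω ^ 2 * ((U_imp ω + ((n_mis : ℝ) * (n_obs : ℝ) / ((n_obs : ℝ) + (n_mis : ℝ))) * (Z_imp ω + Z_PD ω) ^ 2) * (U_PD ω)⁻¹))) P := IU2.add Q2
    rw [hY2,
      integral_add Q3 IU2WV2,
      integral_add IU2 Q2,
      integral_const_mul,
      A2.integral_fun_mul_eq_mul_integral (by fun_prop : Measurable (fun ω => U_obs ω ^ 2)).aestronglyMeasurable
        mWV.aestronglyMeasurable,
      A3.integral_fun_mul_eq_mul_integral (by fun_prop : Measurable (fun ω => U_obs ω ^ 2)).aestronglyMeasurable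
        mWV2.aestronglyMeasurable,
      EU2, EWV, EWV2]
  have hmem : MeasureTheory.MemLp (fun ω => U_obs ω * (1 + ((U_imp ω + ((n_mis : ℝ) * (n_obs : ℝ) / ((n_obs : ℝ) + (n_mis : ℝ))) * (Z_imp ω + Z_PD ω) ^ 2) * (U_PD ω)⁻¹))) 2 P :=
    (MeasureTheory.memLp_two_iff_integrable_sq mY.aestronglyMeasurable).mpr IY2
  -- reduce the variance
  have hfun : (fun ω => σ ^ 2 * (U_obs ω / (((n_obs : ℝ) + (n_mis : ℝ)) - 1))
          * (1 + (U_imp ω + ((n_mis : ℝ) * (n_obs : ℝ) / ((n_obs : ℝ) + (n_mis : ℝ))) * (Z_imp ω + Z_PD ω) ^ 2) / U_PD ω))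
      = fun ω => (σ ^ 2 / (((n_obs : ℝ) + (n_mis : ℝ)) - 1)) * (U_obs ω * (1 + ((U_imp ω + ((n_mis : ℝ) * (n_obs : ℝ) / ((n_obs : ℝ) + (n_mis : ℝ))) * (Z_imp ω + Z_PD ω) ^ 2) * (U_PD ω)⁻¹))) := by
    funext ω; ring
  rw [hfun, variance_const_mul, variance_eq_sub hmem]
  have hpow : ((fun ω => U_obs ω * (1 + ((U_imp ω + ((n_mis : ℝ) * (n_obs : ℝ) / ((n_obs : ℝ) + (n_mis : ℝ))) * (Z_imp ω + Z_PD ω) ^ 2) * (U_PD ω)⁻¹))) ^ 2 : Ω → ℝ) = fun ω => (U_obs ω * (1 + ((U_imp ω + ((n_mis : ℝ) * (n_obs : ℝ) / ((n_obs : ℝ) + (n_mis : ℝ))) * (Z_imp ω + Z_PD ω) ^ 2) * (U_PD ω)⁻¹))) ^ 2 := rfl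
  rw [hpow, EY2, EY]
  -- final arithmetic
  have d2 : ((n_obs : ℝ) - 1 + ν_prior) - 2 ≠ 0 := by linarith
  have d4 : ((n_obs : ℝ) - 1 + ν_prior) - 4 ≠ 0 := by linarith
  have dN : ((n_obs : ℝ) + (n_mis : ℝ)) - 1 ≠ 0 := by linarith
  have dno : (n_obs : ℝ) ≠ 0 := by linarith
  have dnm : (n_mis : ℝ) ≠ 0 := by linarith
  have dsum : (n_obs : ℝ) + (n_mis : ℝ) ≠ 0 := by linarith
  field_simp
  ring
end

section
/- Let c be a real constant with ν_obs + c > 0 and define σ̂²_SI,M = σ²·(U_obs/(n − 1))·(1 + (U_imp + (n_obs/n)·n_mis·Z̄_imp²)/(ν_obs + c)). Then, almost surely, the conditional expectation of σ̂²_SI,M given the σ-algebra generated by U_obs equals σ²·(U_obs/(n − 1))·(1 + (n_mis − 1 + n_obs/n)/(n_obs + c − 1)); this gives the infinite-imputation ML-imputation variance estimator. -/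
open MeasureTheory ProbabilityTheory NNReal

open Real Set

lemma integral_withDensity_ofReal {p : ℝ → ℝ} (hp : Measurable p) (hpn : ∀ x, 0 ≤ p x)
    (g : ℝ → ℝ) :
    ∫ x, g x ∂(volume.withDensity (fun x => ENNReal.ofReal (p x))) = ∫ x, p x * g x := by
  have h : (fun x => ENNReal.ofReal (p x)) = fun x => ((p x).toNNReal : ENNReal) := rfl
  rw [h, integral_withDensity_eq_integral_smul hp.real_toNNReal g]
  refine integral_congr_ae (Filter.Eventually.of_forall fun x => ?_)
  simp [NNReal.smul_def, Real.coe_toNNReal _ (hpn x)]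

lemma integrable_withDensity_ofReal {p : ℝ → ℝ} (hp : Measurable p) (hpn : ∀ x, 0 ≤ p x)
    {g : ℝ → ℝ} (hg : Integrable (fun x => p x * g x) volume) :
    Integrable g (volume.withDensity (fun x => ENNReal.ofReal (p x))) := by
  have h : (fun x => ENNReal.ofReal (p x)) = fun x => ((p x).toNNReal : ENNReal) := rfl
  rw [h, integrable_withDensity_iff_integrable_smul hp.real_toNNReal]
  refine hg.congr (Filter.Eventually.of_forall fun x => ?_)
  simp [NNReal.smul_def, Real.coe_toNNReal _ (hpn x)]

lemma gamma_mul_id_eqOn {a r : ℝ} :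
    EqOn (fun x => ProbabilityTheory.gammaPDFReal a r x * x)
      (fun x => r ^ a / Real.Gamma a * (x ^ a * Real.exp (-r * x ^ (1:ℝ)))) (Ioi 0) := by
  intro x hx
  have hx0 : (0:ℝ) < x := hx
  have h1 : x ^ (a-1) * x = x ^ a := by
    nth_rw 2 [← Real.rpow_one x]
    rw [← Real.rpow_add hx0]; ring_nf
  simp only [ProbabilityTheory.gammaPDFReal, if_pos hx0.le, Real.rpow_one, neg_mul]
  rw [← h1]; ring

lemma gamma_mul_id_zero {a r : ℝ} : EqOn (fun x => ProbabilityTheory.gammaPDFReal a r x * x)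
    (fun _ => (0:ℝ)) (Iic 0) := by
  intro x hx
  have hx' : x ≤ 0 := hx
  rcases lt_or_eq_of_le hx' with h | h
  · simp [ProbabilityTheory.gammaPDFReal, not_le.mpr h]
  · simp [h]

lemma gamma_mul_id_integrable {a r : ℝ} (ha : 0 < a) (hr : 0 < r) :
    Integrable (fun x => ProbabilityTheory.gammaPDFReal a r x * x) volume := by
  have h1 : IntegrableOn (fun x => ProbabilityTheory.gammaPDFReal a r x * x) (Ioi 0) volume := by
    refine IntegrableOn.congr_fun ?_ (fun x hx => (gamma_mul_id_eqOn hx).symm) measurableSet_Ioi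
    exact (integrableOn_rpow_mul_exp_neg_mul_rpow (by linarith : (-1:ℝ) < a)
      one_pos hr).const_mul (r ^ a / Real.Gamma a)
  have h2 : IntegrableOn (fun x => ProbabilityTheory.gammaPDFReal a r x * x) (Iic 0) volume := by
    refine IntegrableOn.congr_fun ?_ (fun x hx => (gamma_mul_id_zero hx).symm) measurableSet_Iic
    exact integrableOn_zero
  have h3 := h2.union h1
  rwa [Iic_union_Ioi, integrableOn_univ] at h3

lemma gamma_integrable_id {a r : ℝ} (ha : 0 < a) (hr : 0 < r) :
    Integrable id (ProbabilityTheory.gammaMeasure a r) :=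
  integrable_withDensity_ofReal (ProbabilityTheory.measurable_gammaPDFReal a r)
    (fun x => ProbabilityTheory.gammaPDFReal_nonneg ha hr x) (gamma_mul_id_integrable ha hr)

lemma gamma_mean {a r : ℝ} (ha : 0 < a) (hr : 0 < r) :
    ∫ x, x ∂(ProbabilityTheory.gammaMeasure a r) = a / r := by
  have hΓ : 0 < Real.Gamma a := Real.Gamma_pos_of_pos ha
  rw [show ProbabilityTheory.gammaMeasure a r
      = volume.withDensity (fun x => ENNReal.ofReal (ProbabilityTheory.gammaPDFReal a r x)) from
      rfl,
    integral_withDensity_ofReal (ProbabilityTheory.measurable_gammaPDFReal a r)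
      (fun x => ProbabilityTheory.gammaPDFReal_nonneg ha hr x)]
  have hint := gamma_mul_id_integrable (a := a) (r := r) ha hr
  rw [← integral_add_compl measurableSet_Iic hint, compl_Iic]
  rw [setIntegral_congr_fun measurableSet_Iic gamma_mul_id_zero,
    setIntegral_congr_fun measurableSet_Ioi gamma_mul_id_eqOn]
  rw [integral_zero, integral_const_mul,
    integral_rpow_mul_exp_neg_mul_rpow one_pos (by linarith : (-1:ℝ) < a) hr]
  have h1 : r ^ a * r ^ (-(a + 1)) = r⁻¹ := by
    rw [← Real.rpow_add hr]
    norm_num [Real.rpow_neg_one]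
  simp only [zero_add, div_one, one_div]
  rw [Real.Gamma_add_one ha.ne']
  calc r ^ a / Gamma a * (r ^ (-(a + 1)) * 1 * (a * Gamma a))
      = (r ^ a * r ^ (-(a + 1))) * a * (Gamma a / Gamma a) := by ring
    _ = a / r := by rw [h1, div_self hΓ.ne']; field_simp

lemma rpow_two_eq (x : ℝ) : x ^ (2:ℝ) = x ^ 2 := by
  rw [show (2:ℝ) = ((2:ℕ):ℝ) by norm_num, Real.rpow_natCast]

lemma gaussian_sq_key (v : ℝ≥0) :
    (fun x : ℝ => ProbabilityTheory.gaussianPDFReal 0 v x * x ^ 2)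
      = fun x => (Real.sqrt (2 * Real.pi * v))⁻¹
          * (x ^ (2:ℝ) * Real.exp (-(2 * (v:ℝ))⁻¹ * x ^ 2)) := by
  funext x
  rw [ProbabilityTheory.gaussianPDFReal, rpow_two_eq]
  rw [sub_zero]
  rw [show -x ^ 2 / (2 * (v:ℝ)) = -(2 * (v:ℝ))⁻¹ * x ^ 2 by ring]
  ring

lemma gaussian_sq_integrand_integrable {v : ℝ≥0} (hv : v ≠ 0) :
    Integrable (fun x : ℝ => ProbabilityTheory.gaussianPDFReal 0 v x * x ^ 2) volume := by
  rw [gaussian_sq_key]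
  exact (integrable_rpow_mul_exp_neg_mul_sq (by positivity) (by norm_num : (-1:ℝ) < 2)).const_mul _

lemma gaussian_sq_integrable {v : ℝ≥0} (hv : v ≠ 0) :
    Integrable (fun x : ℝ => x ^ 2) (ProbabilityTheory.gaussianReal 0 v) := by
  rw [ProbabilityTheory.gaussianReal_of_var_ne_zero 0 hv]
  exact integrable_withDensity_ofReal (ProbabilityTheory.measurable_gaussianPDFReal 0 v)
    (ProbabilityTheory.gaussianPDFReal_nonneg 0 v) (gaussian_sq_integrand_integrable hv)

lemma gaussian_sq_integral {v : ℝ≥0} (hv : v ≠ 0) :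
    ∫ x, x ^ 2 ∂(ProbabilityTheory.gaussianReal 0 v) = (v:ℝ) := by
  have hvR : (0:ℝ) < (v:ℝ) := NNReal.coe_pos.mpr (pos_iff_ne_zero.mpr hv)
  have hb : (0:ℝ) < (2 * (v:ℝ))⁻¹ := by positivity
  rw [ProbabilityTheory.gaussianReal_of_var_ne_zero 0 hv, ProbabilityTheory.gaussianPDF_def,
    integral_withDensity_ofReal (ProbabilityTheory.measurable_gaussianPDFReal 0 v)
      (ProbabilityTheory.gaussianPDFReal_nonneg 0 v)]
  rw [show (fun x : ℝ => ProbabilityTheory.gaussianPDFReal 0 v x * x ^ 2)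
      = fun x => (Real.sqrt (2 * Real.pi * v))⁻¹
          * (x ^ (2:ℝ) * Real.exp (-(2 * (v:ℝ))⁻¹ * x ^ 2)) from gaussian_sq_key v]
  rw [integral_const_mul]
  set b : ℝ := (2 * (v:ℝ))⁻¹ with hbdef
  set f : ℝ → ℝ := fun x => x ^ (2:ℝ) * Real.exp (-b * x ^ 2) with hfdef
  have hfint : Integrable f volume := integrable_rpow_mul_exp_neg_mul_sq hb (by norm_num)
  have heven : ∫ x in Iic (0:ℝ), f x = ∫ x in Ioi (0:ℝ), f x := by
    calc ∫ x in Iic (0:ℝ), f x = ∫ x in Iic (-(0:ℝ)), f x := by rw [neg_zero]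
      _ = ∫ x in Ioi (0:ℝ), f (-x) := (integral_comp_neg_Ioi _ _).symm
      _ = ∫ x in Ioi (0:ℝ), f x := by
          refine setIntegral_congr_fun measurableSet_Ioi fun x hx => ?_
          simp only [hfdef, rpow_two_eq, neg_sq]
  have hIoi : ∫ x in Ioi (0:ℝ), f x
      = b ^ (-((2:ℝ) + 1) / 2) * (1 / 2) * Real.Gamma (((2:ℝ) + 1) / 2) := by
    rw [show (∫ x in Ioi (0:ℝ), f x)
        = ∫ x in Ioi (0:ℝ), x ^ (2:ℝ) * Real.exp (-b * x ^ (2:ℝ)) from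
        setIntegral_congr_fun measurableSet_Ioi fun x _ => by simp only [hfdef, rpow_two_eq]]
    exact integral_rpow_mul_exp_neg_mul_rpow two_pos (by norm_num) hb
  have htot : ∫ x, f x = 2 * ∫ x in Ioi (0:ℝ), f x := by
    rw [← integral_add_compl measurableSet_Iic hfint, compl_Iic, heven]; ring
  have hΓ : Real.Gamma (((2:ℝ) + 1) / 2) = Real.sqrt Real.pi / 2 := by
    rw [show (((2:ℝ) + 1) / 2) = 1/2 + 1 by norm_num, Real.Gamma_add_one (by norm_num),
      Real.Gamma_one_half_eq]
    ring
  have hbval : b ^ (-((2:ℝ) + 1) / 2) = (2 * (v:ℝ)) * Real.sqrt (2 * (v:ℝ)) := by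
    rw [show (-((2:ℝ) + 1) / 2) = (-1) + (-(1/2)) by norm_num, Real.rpow_add hb,
      Real.rpow_neg_one, Real.rpow_neg hb.le, ← Real.sqrt_eq_rpow, hbdef, inv_inv,
      ← Real.sqrt_inv, inv_inv]
  rw [htot, hIoi, hΓ, hbval]
  have hsplit : Real.sqrt (2 * Real.pi * (v:ℝ)) = Real.sqrt (2 * (v:ℝ)) * Real.sqrt Real.pi := by
    rw [show 2 * Real.pi * (v:ℝ) = (2 * (v:ℝ)) * Real.pi by ring,
      Real.sqrt_mul (by positivity)]
  rw [hsplit]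
  have h2v : (0:ℝ) < 2 * (v:ℝ) := by positivity
  have hs : Real.sqrt (2 * (v:ℝ)) * Real.sqrt (2 * (v:ℝ)) = 2 * (v:ℝ) :=
    Real.mul_self_sqrt h2v.le
  have hq : Real.sqrt (2 * (v:ℝ)) ≠ 0 := by positivity
  have hp : Real.sqrt Real.pi ≠ 0 := by positivity
  field_simp

/-- the conditional expectation of the single-imputation ML-imputation
variance estimator given the sigma-algebra generated by U_obs (the infinite-imputation
ML-imputation variance estimator). -/
theorem stmt14
    {Ω : Type*} [MeasurableSpace Ω] (P : Measure Ω) [IsProbabilityMeasure P]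
    (μ σ : ℝ) (hσ : 0 < σ)
    (n_obs n_mis : ℕ) (hnobs : 2 ≤ n_obs) (hnmis : 2 ≤ n_mis)
    (U_obs Z_obs Z_imp U_imp : Ω → ℝ)
    (hUmeas : Measurable U_obs) (hZmeas : Measurable Z_obs)
    (hZimpmeas : Measurable Z_imp) (hUimpmeas : Measurable U_imp)
    (hU : P.map U_obs = gammaMeasure (((n_obs : ℝ) - 1) / 2) (1 / 2))
    (hZ : P.map Z_obs = gaussianReal 0 (1 / (n_obs : ℝ≥0)))
    (hZimp : P.map Z_imp = gaussianReal 0 (1 / (n_mis : ℝ≥0)))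
    (hUimp : P.map U_imp = gammaMeasure (((n_mis : ℝ) - 1) / 2) (1 / 2))
    (hindep : iIndepFun ![U_obs, Z_obs, Z_imp, U_imp] P)
    (c : ℝ) (hc : 0 < ((n_obs : ℝ) - 1) + c) :
    P[(fun ω => σ ^ 2 * (U_obs ω / (((n_obs : ℝ) + (n_mis : ℝ)) - 1))
        * (1 + (U_imp ω + ((n_obs : ℝ) / ((n_obs : ℝ) + (n_mis : ℝ)))
            * (n_mis : ℝ) * Z_imp ω ^ 2) / (((n_obs : ℝ) - 1) + c)))
      | MeasurableSpace.comap U_obs inferInstance]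
    =ᵐ[P] fun ω => σ ^ 2 * (U_obs ω / (((n_obs : ℝ) + (n_mis : ℝ)) - 1))
        * (1 + ((n_mis : ℝ) - 1 + (n_obs : ℝ) / ((n_obs : ℝ) + (n_mis : ℝ)))
            / ((n_obs : ℝ) + c - 1)) := by
  have hnm2 : (2:ℝ) ≤ (n_mis:ℝ) := by exact_mod_cast hnmis
  have hno2 : (2:ℝ) ≤ (n_obs:ℝ) := by exact_mod_cast hnobs
  set nR : ℝ := (n_obs:ℝ) + (n_mis:ℝ) with hnRdef
  set d : ℝ := ((n_obs:ℝ) - 1) + c with hddef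
  set aconst : ℝ := ((n_obs:ℝ) / nR) * (n_mis:ℝ) with hacdef
  set F : Ω → ℝ := fun ω => σ ^ 2 * (U_obs ω / (nR - 1)) with hFdef
  set G : Ω → ℝ := fun ω => 1 + (U_imp ω + aconst * Z_imp ω ^ 2) / d with hGdef
  have hφ : Measurable (fun p : ℝ × ℝ => 1 + (p.2 + aconst * p.1 ^ 2) / d) := by fun_prop
  have hψ : Measurable (fun x : ℝ => σ ^ 2 * (x / (nR - 1))) := by fun_prop
  have hvmis : (1 / (n_mis : ℝ≥0)) ≠ 0 :=
    one_div_ne_zero (Nat.cast_ne_zero.mpr (by omega))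
  have haUobs : 0 < ((n_obs:ℝ) - 1) / 2 := by linarith
  have haUimp : 0 < ((n_mis:ℝ) - 1) / 2 := by linarith
  have hUobs_int : Integrable U_obs P := by
    have h0 : Integrable id (P.map U_obs) := by
      rw [hU]; exact gamma_integrable_id haUobs one_half_pos
    exact (integrable_map_measure aestronglyMeasurable_id hUmeas.aemeasurable).mp h0
  have hUimp_int : Integrable U_imp P := by
    have h0 : Integrable id (P.map U_imp) := by
      rw [hUimp]; exact gamma_integrable_id haUimp one_half_pos
    exact (integrable_map_measure aestronglyMeasurable_id hUimpmeas.aemeasurable).mp h0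
  have hZsq_int : Integrable (fun ω => Z_imp ω ^ 2) P := by
    have h0 : Integrable (fun x : ℝ => x ^ 2) (P.map Z_imp) := by
      rw [hZimp]; exact gaussian_sq_integrable hvmis
    exact (integrable_map_measure (by fun_prop) hZimpmeas.aemeasurable).mp h0
  have hF_int : Integrable F P := (hUobs_int.div_const (nR - 1)).const_mul (σ ^ 2)
  have hG_int : Integrable G P :=
    (integrable_const (1:ℝ)).add ((hUimp_int.add (hZsq_int.const_mul aconst)).div_const d)
  have hvec : ∀ i, Measurable (![U_obs, Z_obs, Z_imp, U_imp] i) := by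
    intro i; fin_cases i <;> assumption
  have hpair : IndepFun (fun ω => (Z_imp ω, U_imp ω)) U_obs P :=
    hindep.indepFun_prodMk hvec 2 3 0 (by decide) (by decide)
  have hFG_indep : IndepFun F G P := (hpair.symm.comp hψ hφ)
  have hFG_int : Integrable (F * G) P := hFG_indep.integrable_mul hF_int hG_int
  have hm : MeasurableSpace.comap U_obs inferInstance ≤ _ := hUmeas.comap_le
  have hFmeas : StronglyMeasurable[MeasurableSpace.comap U_obs inferInstance] F :=
    (hψ.comp (Measurable.of_comap_le le_rfl)).stronglyMeasurable
  have step1 : P[F * G | MeasurableSpace.comap U_obs inferInstance]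
      =ᵐ[P] F * P[G | MeasurableSpace.comap U_obs inferInstance] :=
    condExp_mul_of_stronglyMeasurable_left hFmeas hFG_int hG_int
  have hGmeas1 : StronglyMeasurable[MeasurableSpace.comap
      (fun ω => (Z_imp ω, U_imp ω)) inferInstance] G :=
    (hφ.comp (Measurable.of_comap_le le_rfl)).stronglyMeasurable
  have step2 : P[G | MeasurableSpace.comap U_obs inferInstance]
      =ᵐ[P] fun _ => ∫ ω, G ω ∂P :=
    condExp_indep_eq ((hZimpmeas.prodMk hUimpmeas).comap_le) hm hGmeas1 hpair
  have hmne : (n_mis:ℝ) ≠ 0 := by linarith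
  have hEUimp : ∫ ω, U_imp ω ∂P = (n_mis:ℝ) - 1 := by
    have h0 : ∫ ω, U_imp ω ∂P = ∫ x, x ∂(P.map U_imp) :=
      (integral_map hUimpmeas.aemeasurable aestronglyMeasurable_id).symm
    rw [h0, hUimp, gamma_mean haUimp one_half_pos]
    ring
  have hEZsq : ∫ ω, Z_imp ω ^ 2 ∂P = 1 / (n_mis:ℝ) := by
    have h0 : ∫ ω, Z_imp ω ^ 2 ∂P = ∫ x, x ^ 2 ∂(P.map Z_imp) :=
      (integral_map hZimpmeas.aemeasurable
        (by fun_prop : AEStronglyMeasurable (fun x : ℝ => x ^ 2) (P.map Z_imp))).symm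
    rw [h0, hZimp, gaussian_sq_integral hvmis]
    push_cast
    ring
  have hEG : ∫ ω, G ω ∂P
      = 1 + ((n_mis:ℝ) - 1 + (n_obs:ℝ) / nR) / ((n_obs:ℝ) + c - 1) := by
    have h4 : ∫ ω, aconst * Z_imp ω ^ 2 ∂P = aconst * (1 / (n_mis:ℝ)) := by
      rw [integral_const_mul, hEZsq]
    have h3 : ∫ ω, (U_imp ω + aconst * Z_imp ω ^ 2) ∂P
        = ((n_mis:ℝ) - 1) + aconst * (1 / (n_mis:ℝ)) := by
      rw [integral_add hUimp_int (hZsq_int.const_mul aconst), hEUimp, h4]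
    have h2 : ∫ ω, (U_imp ω + aconst * Z_imp ω ^ 2) / d ∂P
        = (((n_mis:ℝ) - 1) + aconst * (1 / (n_mis:ℝ))) / d := by
      rw [integral_div, h3]
    have h1 : ∫ ω, G ω ∂P
        = (∫ _ω, (1:ℝ) ∂P) + (((n_mis:ℝ) - 1) + aconst * (1 / (n_mis:ℝ))) / d := by
      have hg2 : Integrable (fun ω => (U_imp ω + aconst * Z_imp ω ^ 2) / d) P :=
        (hUimp_int.add (hZsq_int.const_mul aconst)).div_const d
      simp only [hGdef]
      rw [integral_add (integrable_const (1:ℝ)) hg2, h2]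
    have hac : aconst * (1 / (n_mis:ℝ)) = (n_obs:ℝ) / nR := by
      rw [hacdef]; field_simp
    have hdd : d = (n_obs:ℝ) + c - 1 := by rw [hddef]; ring
    rw [h1, hac, hdd]
    simp
  have hgoalfun : (fun ω => σ ^ 2 * (U_obs ω / (nR - 1))
      * (1 + (U_imp ω + aconst * Z_imp ω ^ 2) / d)) = F * G := rfl
  rw [hgoalfun]
  refine (step1.trans ((Filter.EventuallyEq.refl _ F).mul step2)).trans ?_
  refine Filter.EventuallyEq.of_eq ?_
  funext ω
  simp only [Pi.mul_apply, hEG]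
  rfl
end

section
/- If D ≥ 2, then with X̄ = (1/D)·Σ_{d=1}^D X_d, the between-imputation variance satisfies E[(1/(D − 1))·Σ_{d=1}^D (X_d − X̄)²] = Var(X_1) − Var(E[X_1 | σ(Y)]). In words: the between-imputation sample variance is an unbiased estimator of the variance of the single-imputation estimator minus the variance of the infinite-imputation estimator. -/
open MeasureTheory ProbabilityTheory

lemma variance_congr' {Ω : Type*} [MeasurableSpace Ω] {P : Measure Ω} {X Z : Ω → ℝ}
    (h : X =ᵐ[P] Z) : variance X P = variance Z P := by
  unfold ProbabilityTheory.variance ProbabilityTheory.evariance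
  rw [integral_congr_ae h]
  congr 1
  apply lintegral_congr_ae
  filter_upwards [h] with ω hω
  rw [hω]

lemma integrable_mul_of_memL2 {Ω : Type*} [MeasurableSpace Ω] {P : Measure Ω} {X Z : Ω → ℝ}
    (hX : MemLp X 2 P) (hZ : MemLp Z 2 P) : Integrable (fun ω => X ω * Z ω) P := by
  have : MemLp (X • Z) 1 P := hZ.smul hX
  exact memLp_one_iff_integrable.mp this

/-- the between-imputation sample variance is an unbiased estimator of
the variance of the single-imputation estimator minus the variance of the
infinite-imputation estimator (the conditional expectation given the observed data). -/
theorem stmt16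
    {Ω : Type*} [MeasurableSpace Ω] (P : Measure Ω) [IsProbabilityMeasure P]
    {E F : Type*} [MeasurableSpace E] [MeasurableSpace F]
    (Y : Ω → E) (hY : Measurable Y)
    (D : ℕ) (hD : 2 ≤ D)
    (W : Fin D → Ω → F) (hWmeas : ∀ d, Measurable (W d))
    (hiid : ∀ d, P.map (W d) = P.map (W ⟨0, by omega⟩))
    (hWindep : iIndepFun W P)
    (hYW : IndepFun Y (fun ω d => W d ω) P)
    (f : E × F → ℝ) (hf : Measurable f)
    (hL2 : ∀ d, MemLp (fun ω => f (Y ω, W d ω)) 2 P) :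
    (∫ ω, (1 / ((D : ℝ) - 1))
        * ∑ d, (f (Y ω, W d ω) - (1 / (D : ℝ)) * ∑ e, f (Y ω, W e ω)) ^ 2 ∂P)
      = variance (fun ω => f (Y ω, W ⟨0, by omega⟩ ω)) P
        - variance (P[(fun ω => f (Y ω, W ⟨0, by omega⟩ ω)) | MeasurableSpace.comap Y inferInstance]) P := by
  have hm : MeasurableSpace.comap Y inferInstance ≤ ‹MeasurableSpace Ω› := hY.comap_le
  haveI : SigmaFinite (P.trim hm) := by
    haveI := isFiniteMeasure_trim (μ := P) hm
    infer_instance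
  set d0 : Fin D := ⟨0, by omega⟩ with hd0def
  set d1 : Fin D := ⟨1, by omega⟩ with hd1def
  have hd01 : d0 ≠ d1 := by simp [hd0def, hd1def, Fin.ext_iff]
  set ν : Measure F := P.map (W d0) with hνdef
  set μY : Measure E := P.map Y with hμdef
  haveI : IsProbabilityMeasure μY := Measure.isProbabilityMeasure_map hY.aemeasurable
  haveI : IsProbabilityMeasure ν := Measure.isProbabilityMeasure_map (hWmeas d0).aemeasurable
  set X : Fin D → Ω → ℝ := fun d ω => f (Y ω, W d ω) with hXdef
  have hXL2 : ∀ d, MemLp (X d) 2 P := hL2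
  have hpairm : ∀ d, Measurable (fun ω => (Y ω, W d ω)) := fun d => hY.prodMk (hWmeas d)
  have htripm : ∀ d e : Fin D, Measurable (fun ω => (Y ω, (W d ω, W e ω))) :=
    fun d e => hY.prodMk ((hWmeas d).prodMk (hWmeas e))
  -- laws
  have hpair : ∀ d, P.map (fun ω => (Y ω, W d ω)) = μY.prod ν := by
    intro d
    have h1 : IndepFun Y (W d) P := hYW.comp measurable_id (measurable_pi_apply d)
    rw [(indepFun_iff_map_prod_eq_prod_map_map hY.aemeasurable
      (hWmeas d).aemeasurable).mp h1, hiid d]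
  have htrip : ∀ d e : Fin D, d ≠ e →
      P.map (fun ω => (Y ω, (W d ω, W e ω))) = μY.prod (ν.prod ν) := by
    intro d e hde
    have h1 : IndepFun Y (fun ω => (W d ω, W e ω)) P :=
      hYW.comp measurable_id ((measurable_pi_apply d).prodMk (measurable_pi_apply e))
    have h2 : IndepFun (W d) (W e) P := hWindep.indepFun hde
    rw [(indepFun_iff_map_prod_eq_prod_map_map hY.aemeasurable
        ((hWmeas d).prodMk (hWmeas e)).aemeasurable).mp h1,
      (indepFun_iff_map_prod_eq_prod_map_map (hWmeas d).aemeasurable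
        (hWmeas e).aemeasurable).mp h2, hiid d, hiid e]
  -- moments
  set g : E → ℝ := fun y => ∫ w, f (y, w) ∂ν with hgdef
  set S : ℝ := ∫ p, f p ^ 2 ∂(μY.prod ν) with hSdef
  set C : ℝ := ∫ y, g y ^ 2 ∂μY with hCdef
  set M : ℝ := ∫ p, f p ∂(μY.prod ν) with hMdef
  have hgsm : StronglyMeasurable g := hf.stronglyMeasurable.integral_prod_right'
  have hfL2prod : MemLp f 2 (μY.prod ν) := by
    rw [← hpair d0]
    exact (memLp_map_measure_iff hf.aestronglyMeasurable
      (hpairm d0).aemeasurable).mpr (hXL2 d0)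
  have hfint : Integrable f (μY.prod ν) := hfL2prod.integrable one_le_two
  have hSd : ∀ d, ∫ ω, X d ω ^ 2 ∂P = S := by
    intro d
    have h1 : ∫ p, f p ^ 2 ∂(P.map (fun ω => (Y ω, W d ω))) = ∫ ω, X d ω ^ 2 ∂P :=
      integral_map (hpairm d).aemeasurable ((hf.pow_const 2).aestronglyMeasurable)
    rw [← h1, hpair d]
  set H : E × (F × F) → ℝ := fun q => f (q.1, q.2.1) * f (q.1, q.2.2) with hHdef
  have hHm : Measurable H :=
    (hf.comp (measurable_fst.prodMk (measurable_fst.comp measurable_snd))).mul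
      (hf.comp (measurable_fst.prodMk (measurable_snd.comp measurable_snd)))
  have hmul : ∀ d e, Integrable (fun ω => X d ω * X e ω) P :=
    fun d e => integrable_mul_of_memL2 (hXL2 d) (hXL2 e)
  have hHint : Integrable H (μY.prod (ν.prod ν)) := by
    rw [← htrip d0 d1 hd01]
    exact (integrable_map_measure hHm.aestronglyMeasurable
      (htripm d0 d1).aemeasurable).mpr (hmul d0 d1)
  have hHinner : ∀ y, ∫ z, H (y, z) ∂(ν.prod ν) = g y ^ 2 := by
    intro y
    have h1 := integral_prod_mul (μ := ν) (ν := ν)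
      (fun w => f (y, w)) (fun w => f (y, w))
    simpa [hHdef, hgdef, sq] using h1
  have hCde : ∀ d e, d ≠ e → ∫ ω, X d ω * X e ω ∂P = C := by
    intro d e hde
    have h1 : ∫ q, H q ∂(P.map (fun ω => (Y ω, (W d ω, W e ω)))) = ∫ ω, X d ω * X e ω ∂P :=
      integral_map (htripm d e).aemeasurable hHm.aestronglyMeasurable
    rw [← h1, htrip d e hde, integral_prod _ hHint]
    simp only [hHinner]
    rfl
  have hgint : Integrable g μY := hfint.integral_prod_left
  have hg2int : Integrable (fun y => g y ^ 2) μY := by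
    have h2 := hHint.integral_prod_left
    exact (integrable_congr (Filter.Eventually.of_forall (fun y => hHinner y))).mp h2
  have hgL2 : MemLp g 2 μY :=
    (memLp_two_iff_integrable_sq hgsm.aestronglyMeasurable).mpr hg2int
  have hgYL2 : MemLp (fun ω => g (Y ω)) 2 P :=
    (memLp_map_measure_iff hgsm.aestronglyMeasurable hY.aemeasurable).mp hgL2
  have hgYint : Integrable (fun ω => g (Y ω)) P := hgYL2.integrable one_le_two
  have hM0 : ∫ ω, X d0 ω ∂P = M := by
    have h1 : ∫ p, f p ∂(P.map (fun ω => (Y ω, W d0 ω))) = ∫ ω, X d0 ω ∂P :=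
      integral_map (hpairm d0).aemeasurable hf.aestronglyMeasurable
    rw [← h1, hpair d0]
  have hMg : ∫ ω, g (Y ω) ∂P = M := by
    have h1 : ∫ ω, g (Y ω) ∂P = ∫ y, g y ∂μY :=
      (integral_map hY.aemeasurable hgsm.aestronglyMeasurable).symm
    have h2 : M = ∫ y, g y ∂μY := integral_prod f hfint
    rw [h1, h2]
  have hCgY : ∫ ω, g (Y ω) ^ 2 ∂P = C :=
    (integral_map hY.aemeasurable
      ((hgsm.measurable.pow_const 2).aestronglyMeasurable)).symm
  have hX0int : Integrable (X d0) P := (hXL2 d0).integrable one_le_two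
  have hce : (fun ω => g (Y ω)) =ᵐ[P] P[X d0 | MeasurableSpace.comap Y inferInstance] := by
    refine ae_eq_condExp_of_forall_setIntegral_eq hm hX0int
      (fun s _ _ => hgYint.integrableOn) ?_ ?_
    · rintro s ⟨A, hA, rfl⟩ _
      have h1 : ∫ ω in Y ⁻¹' A, g (Y ω) ∂P = ∫ y in A, g y ∂μY :=
        (setIntegral_map hA hgsm.aestronglyMeasurable hY.aemeasurable).symm
      have hpre : (fun ω => (Y ω, W d0 ω)) ⁻¹' (A ×ˢ Set.univ) = Y ⁻¹' A := by
        ext ω; simp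
      have h2 : ∫ p in A ×ˢ Set.univ, f p ∂(μY.prod ν) = ∫ ω in Y ⁻¹' A, X d0 ω ∂P := by
        rw [← hpair d0, setIntegral_map (hA.prod MeasurableSet.univ)
          hf.aestronglyMeasurable (hpairm d0).aemeasurable, hpre]
      have h3 : ∫ p in A ×ˢ Set.univ, f p ∂(μY.prod ν) = ∫ y in A, g y ∂μY := by
        rw [setIntegral_prod f hfint.integrableOn]
        simp [Measure.restrict_univ]
        rfl
      rw [h1, ← h2, h3]
    · exact StronglyMeasurable.aestronglyMeasurable
        (hgsm.comp_measurable (measurable_iff_comap_le.mpr le_rfl))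
  -- variances
  have hVar1 : variance (X d0) P = S - M ^ 2 := by
    rw [variance_eq_sub (hXL2 d0)]
    have h1 : (∫ ω, (X d0 ^ 2) ω ∂P) = S := by
      simpa [Pi.pow_apply] using hSd d0
    rw [h1, hM0]
  have hVar2 : variance (P[X d0 | MeasurableSpace.comap Y inferInstance]) P = C - M ^ 2 := by
    rw [← variance_congr' hce, variance_eq_sub hgYL2]
    have h1 : (∫ ω, ((fun ω => g (Y ω)) ^ 2) ω ∂P) = C := by
      simpa [Pi.pow_apply] using hCgY
    rw [h1, hMg]
  -- LHS
  have hDne : ((D : ℝ)) ≠ 0 := Nat.cast_ne_zero.mpr (by omega)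
  have hD1ne : ((D : ℝ)) - 1 ≠ 0 := by
    have h2 : (2 : ℝ) ≤ (D : ℝ) := by exact_mod_cast hD
    linarith
  have hptw : ∀ ω, (1 / ((D : ℝ) - 1)) * ∑ d, (X d ω - (1 / (D : ℝ)) * ∑ e, X e ω) ^ 2
      = (1 / ((D : ℝ) - 1)) *
        ((∑ d, X d ω ^ 2) - (1 / (D : ℝ)) * ∑ d, ∑ e, X d ω * X e ω) := by
    intro ω
    congr 1
    have hsq : (∑ e, X e ω) ^ 2 = ∑ d, ∑ e, X d ω * X e ω := by
      rw [sq, Finset.sum_mul_sum]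
    rw [← hsq]
    have hexp : ∑ d, (X d ω - (1 / (D : ℝ)) * ∑ e, X e ω) ^ 2
        = ∑ d, (X d ω ^ 2 - ((2 / (D : ℝ)) * (∑ e, X e ω)) * X d ω
            + (1 / (D : ℝ)) ^ 2 * (∑ e, X e ω) ^ 2) :=
      Finset.sum_congr rfl (fun d _ => by ring)
    rw [hexp, Finset.sum_add_distrib, Finset.sum_sub_distrib, ← Finset.mul_sum,
      Finset.sum_const, Finset.card_univ, Fintype.card_fin, nsmul_eq_mul]
    field_simp
    ring
  have hintsq : Integrable (fun ω => ∑ d, X d ω ^ 2) P :=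
    integrable_finset_sum _ (fun d _ => (hXL2 d).integrable_sq)
  have hintmul : Integrable (fun ω => ∑ d, ∑ e, X d ω * X e ω) P :=
    integrable_finset_sum _ (fun d _ => integrable_finset_sum _ (fun e _ => hmul d e))
  have hsum2 : ∀ d, ∑ e, ∫ ω, X d ω * X e ω ∂P = S + ((D : ℝ) - 1) * C := by
    intro d
    rw [← Finset.add_sum_erase Finset.univ _ (Finset.mem_univ d)]
    congr 1
    · simpa [sq] using hSd d
    · rw [Finset.sum_congr rfl (fun e he => hCde d e (Finset.mem_erase.mp he).1.symm),
        Finset.sum_const, Finset.card_erase_of_mem (Finset.mem_univ d),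
        Finset.card_univ, Fintype.card_fin, nsmul_eq_mul,
        Nat.cast_sub (by omega : 1 ≤ D), Nat.cast_one]
  have hLHS : (∫ ω, (1 / ((D : ℝ) - 1)) * ∑ d, (X d ω - (1 / (D : ℝ)) * ∑ e, X e ω) ^ 2 ∂P)
      = S - C := by
    rw [integral_congr_ae (Filter.Eventually.of_forall hptw), integral_const_mul,
      integral_sub hintsq (hintmul.const_mul _), integral_const_mul,
      integral_finset_sum _ (fun d _ => (hXL2 d).integrable_sq)]
    have h4 : ∫ ω, ∑ d, ∑ e, X d ω * X e ω ∂P = (D : ℝ) * (S + ((D : ℝ) - 1) * C) := by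
      rw [integral_finset_sum _ (fun d _ => integrable_finset_sum _ (fun e _ => hmul d e))]
      have h5 : ∀ d : Fin D, (∫ ω, ∑ e, X d ω * X e ω ∂P) = S + ((D : ℝ) - 1) * C := by
        intro d
        rw [integral_finset_sum _ (fun e _ => hmul d e), hsum2 d]
      rw [Finset.sum_congr rfl (fun d _ => h5 d), Finset.sum_const, Finset.card_univ,
        Fintype.card_fin, nsmul_eq_mul]
    rw [h4, Finset.sum_congr rfl (fun d _ => hSd d), Finset.sum_const, Finset.card_univ,
      Fintype.card_fin, nsmul_eq_mul]
    field_simp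
    ring
  show (∫ ω, (1 / ((D : ℝ) - 1)) * ∑ d, (X d ω - (1 / (D : ℝ)) * ∑ e, X e ω) ^ 2 ∂P)
      = variance (X d0) P - variance (P[X d0 | MeasurableSpace.comap Y inferInstance]) P
  rw [hLHS, hVar1, hVar2]
  ring
end

section
/- Let c be a real constant with ν_obs + c > 0 and define the D-fold multiple-imputation mean estimator under ML imputation μ̂_MI,M = μ + σ·(Z̄_obs + (n_mis/n)·√(U_obs/(ν_obs + c))·(1/D)·Σ_{d=1}^D Z̄_imp,d). Then E[μ̂_MI,M] = μ and Var(μ̂_MI,M) = σ²·(1/n_obs + n_mis·(n_obs − 1)/(D·n²·(c + n_obs − 1))). -/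
open MeasureTheory ProbabilityTheory NNReal Real Set Filter Topology
open scoped ENNReal

namespace Stmt17Aux

lemma int_odd {b : ℝ} (hb : 0 < b) : ∫ x : ℝ, x * rexp (-b * x ^ 2) = 0 := by
  have hint : Integrable (fun x : ℝ => x * rexp (-b * x ^ 2)) := integrable_mul_exp_neg_mul_sq hb
  have h1 : ∫ x in Iic (0:ℝ), x * rexp (-b * x ^ 2)
      = - ∫ x in Ioi (0:ℝ), x * rexp (-b * x ^ 2) := by
    have := integral_comp_neg_Iic (0:ℝ) (fun x => x * rexp (-b * x ^ 2))
    rw [neg_zero] at this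
    rw [← this]
    rw [← integral_neg]
    congr 1 with x
    ring_nf
  have h2 := integral_add_compl (measurableSet_Iic (a := (0:ℝ))) hint
  rw [compl_Iic] at h2
  rw [← h2, h1]
  ring

lemma integrable_sq_mul_exp_neg_mul_sq {b : ℝ} (hb : 0 < b) :
    Integrable (fun x : ℝ => x ^ 2 * rexp (-b * x ^ 2)) := by
  have := integrable_rpow_mul_exp_neg_mul_sq hb (s := 2) (by norm_num)
  refine this.congr (ae_of_all _ fun x => ?_)
  show x ^ (2:ℝ) * rexp (-b * x ^ 2) = x ^ 2 * rexp (-b * x ^ 2)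
  rw [Real.rpow_two]

lemma int_sq {b : ℝ} (hb : 0 < b) :
    ∫ x : ℝ, x ^ 2 * rexp (-b * x ^ 2) = Real.sqrt (π / b) / (2 * b) := by
  set g : ℝ → ℝ := fun x => x * rexp (-b * x ^ 2) with hg
  set h : ℝ → ℝ := fun x => rexp (-b * x ^ 2) - 2 * b * (x ^ 2 * rexp (-b * x ^ 2)) with hh
  have hderiv : ∀ x : ℝ, HasDerivAt g (h x) x := by
    intro x
    have h1 : HasDerivAt (fun y : ℝ => -b * y ^ 2) (-b * (2 * x ^ 1)) x :=
      (hasDerivAt_pow 2 x).const_mul (-b)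
    have h2 := ((hasDerivAt_id x).mul h1.exp)
    convert h2 using 1
    all_goals try rfl
    simp [hg, hh]
    ring
  have hint : Integrable h :=
    (integrable_exp_neg_mul_sq hb).sub ((integrable_sq_mul_exp_neg_mul_sq hb).const_mul _)
  have htop : Tendsto g atTop (𝓝 0) := by
    have hlo := rpow_mul_exp_neg_mul_sq_isLittleO_exp_neg hb 1
    have hexp : Tendsto (fun x : ℝ => rexp (-(1/2) * x)) atTop (𝓝 0) :=
      Real.tendsto_exp_atBot.comp (tendsto_id.const_mul_atTop_of_neg (by norm_num))
    have := hlo.trans_tendsto hexp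
    simpa [hg, Real.rpow_one] using this
  have hbot : Tendsto g atBot (𝓝 0) := by
    have := (htop.comp tendsto_neg_atBot_atTop).neg
    simp only [Function.comp_def, neg_zero] at this
    refine this.congr fun x => ?_
    first
    | (simp [hg]; ring)
    | simp [hg]
  have hIoi : ∫ x in Ioi (0:ℝ), h x = 0 - g 0 :=
    integral_Ioi_of_hasDerivAt_of_tendsto' (fun x _ => hderiv x) hint.integrableOn htop
  have hIic : ∫ x in Iic (0:ℝ), h x = g 0 - 0 :=
    integral_Iic_of_hasDerivAt_of_tendsto' (fun x _ => hderiv x) hint.integrableOn hbot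
  have htot : ∫ x, h x = 0 := by
    have h2 := integral_add_compl (measurableSet_Iic (a := (0:ℝ))) hint
    rw [compl_Iic] at h2
    rw [← h2, hIoi, hIic]
    ring
  have hsplit : ∫ x, h x
      = (∫ x, rexp (-b * x ^ 2)) - 2 * b * ∫ x, x ^ 2 * rexp (-b * x ^ 2) := by
    rw [hh]
    rw [integral_sub (integrable_exp_neg_mul_sq hb)
      ((integrable_sq_mul_exp_neg_mul_sq hb).const_mul _), integral_const_mul]
  rw [hsplit] at htot
  rw [integral_gaussian] at htot
  have h2b : (2:ℝ) * b ≠ 0 := by positivity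
  field_simp at htot ⊢
  linarith


lemma integral_withDensity_ofReal {ρ : ℝ → ℝ} (hρ : Measurable ρ) (hρ0 : ∀ x, 0 ≤ ρ x)
    (f : ℝ → ℝ) :
    ∫ x, f x ∂(volume.withDensity (fun x => ENNReal.ofReal (ρ x))) = ∫ x, ρ x * f x := by
  have hcoe : (fun x => ENNReal.ofReal (ρ x)) = fun x => ((Real.toNNReal (ρ x) : ℝ≥0) : ℝ≥0∞) :=
    rfl
  rw [hcoe, integral_withDensity_eq_integral_smul hρ.real_toNNReal f]
  congr 1 with x
  rw [NNReal.smul_def, smul_eq_mul, Real.coe_toNNReal _ (hρ0 x)]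

lemma integrable_withDensity_ofReal {ρ : ℝ → ℝ} (hρ : Measurable ρ) (hρ0 : ∀ x, 0 ≤ ρ x)
    (f : ℝ → ℝ) :
    Integrable f (volume.withDensity (fun x => ENNReal.ofReal (ρ x)))
      ↔ Integrable (fun x => ρ x * f x) volume := by
  have hcoe : (fun x => ENNReal.ofReal (ρ x)) = fun x => ((Real.toNNReal (ρ x) : ℝ≥0) : ℝ≥0∞) :=
    rfl
  rw [hcoe, integrable_withDensity_iff_integrable_smul hρ.real_toNNReal]
  constructor <;> intro h <;> refine h.congr (ae_of_all _ fun x => ?_) <;>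
    simp [NNReal.smul_def, Real.coe_toNNReal _ (hρ0 x)]


open Stmt17Aux in
lemma gaussianPDFReal_zero_eq (v : ℝ≥0) (x : ℝ) :
    gaussianPDFReal 0 v x = (Real.sqrt (2 * π * v))⁻¹ * rexp (-(2 * (v:ℝ))⁻¹ * x ^ 2) := by
  simp only [gaussianPDFReal, sub_zero]
  congr 1
  ring

lemma integral_id_gaussian {v : ℝ≥0} (hv : v ≠ 0) : ∫ x, x ∂(gaussianReal 0 v) = 0 := by
  have hvpos : (0:ℝ) < v := by exact_mod_cast pos_iff_ne_zero.mpr hv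
  have hb : (0:ℝ) < (2 * (v:ℝ))⁻¹ := by positivity
  rw [gaussianReal_of_var_ne_zero _ hv, gaussianPDF_def,
    integral_withDensity_ofReal (measurable_gaussianPDFReal 0 v) (gaussianPDFReal_nonneg 0 v)]
  have : ∫ x, gaussianPDFReal 0 v x * x
      = ∫ x, (Real.sqrt (2 * π * v))⁻¹ * (x * rexp (-(2 * (v:ℝ))⁻¹ * x ^ 2)) := by
    congr 1 with x
    rw [gaussianPDFReal_zero_eq]
    ring
  rw [this, integral_const_mul, int_odd hb, mul_zero]

lemma integral_sq_gaussian {v : ℝ≥0} (hv : v ≠ 0) : ∫ x, x ^ 2 ∂(gaussianReal 0 v) = (v:ℝ) := by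
  have hvpos : (0:ℝ) < v := by exact_mod_cast pos_iff_ne_zero.mpr hv
  have hb : (0:ℝ) < (2 * (v:ℝ))⁻¹ := by positivity
  rw [gaussianReal_of_var_ne_zero _ hv, gaussianPDF_def,
    integral_withDensity_ofReal (measurable_gaussianPDFReal 0 v) (gaussianPDFReal_nonneg 0 v)]
  have h1 : ∫ x, gaussianPDFReal 0 v x * x ^ 2
      = ∫ x, (Real.sqrt (2 * π * v))⁻¹ * (x ^ 2 * rexp (-(2 * (v:ℝ))⁻¹ * x ^ 2)) := by
    congr 1 with x
    rw [gaussianPDFReal_zero_eq]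
    ring
  rw [h1, integral_const_mul, int_sq hb]
  have hπb : π / (2 * (v:ℝ))⁻¹ = 2 * π * v := by
    field_simp
  have h2b : 2 * (2 * (v:ℝ))⁻¹ = (v:ℝ)⁻¹ := by
    field_simp
  rw [hπb, h2b, div_inv_eq_mul, ← mul_assoc,
    inv_mul_cancel₀ (by positivity : Real.sqrt (2 * π * (v:ℝ)) ≠ 0), one_mul]

lemma integrable_id_gaussian {v : ℝ≥0} (hv : v ≠ 0) :
    Integrable (fun x : ℝ => x) (gaussianReal 0 v) := by
  have hvpos : (0:ℝ) < v := by exact_mod_cast pos_iff_ne_zero.mpr hv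
  have hb : (0:ℝ) < (2 * (v:ℝ))⁻¹ := by positivity
  rw [gaussianReal_of_var_ne_zero _ hv, gaussianPDF_def,
    integrable_withDensity_ofReal (measurable_gaussianPDFReal 0 v) (gaussianPDFReal_nonneg 0 v)]
  refine ((integrable_mul_exp_neg_mul_sq hb).const_mul ((Real.sqrt (2 * π * v))⁻¹)).congr
    (ae_of_all _ fun x => ?_)
  simp only [gaussianPDFReal_zero_eq]
  ring

lemma integrable_sq_gaussian {v : ℝ≥0} (hv : v ≠ 0) :
    Integrable (fun x : ℝ => x ^ 2) (gaussianReal 0 v) := by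
  have hvpos : (0:ℝ) < v := by exact_mod_cast pos_iff_ne_zero.mpr hv
  have hb : (0:ℝ) < (2 * (v:ℝ))⁻¹ := by positivity
  rw [gaussianReal_of_var_ne_zero _ hv, gaussianPDF_def,
    integrable_withDensity_ofReal (measurable_gaussianPDFReal 0 v) (gaussianPDFReal_nonneg 0 v)]
  refine ((integrable_sq_mul_exp_neg_mul_sq hb).const_mul ((Real.sqrt (2 * π * v))⁻¹)).congr
    (ae_of_all _ fun x => ?_)
  simp only [gaussianPDFReal_zero_eq]
  ring

lemma memLp_id_gaussian {v : ℝ≥0} (hv : v ≠ 0) : MemLp (id : ℝ → ℝ) 2 (gaussianReal 0 v) := by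
  rw [memLp_two_iff_integrable_sq aestronglyMeasurable_id]
  exact integrable_sq_gaussian hv

lemma gauss_rv {Ω : Type*} [MeasurableSpace Ω] {P : Measure Ω} {X : Ω → ℝ} (hXm : Measurable X)
    {v : ℝ≥0} (hv : v ≠ 0) (hmap : P.map X = gaussianReal 0 v) :
    MemLp X 2 P ∧ (∫ ω, X ω ∂P) = 0 ∧ (∫ ω, (X ω) ^ 2 ∂P) = (v:ℝ) := by
  have hmem : MemLp X 2 P := by
    have h := memLp_id_gaussian (v := v) hv
    rw [← hmap] at h
    exact (memLp_map_measure_iff aestronglyMeasurable_id hXm.aemeasurable).mp h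
  refine ⟨hmem, ?_, ?_⟩
  · have h := integral_map (μ := P) (f := fun x : ℝ => x) hXm.aemeasurable aestronglyMeasurable_id
    rw [hmap] at h
    rw [← h, integral_id_gaussian hv]
  · have h := integral_map (μ := P) (f := fun x : ℝ => x ^ 2) hXm.aemeasurable
      ((measurable_id.pow_const 2).aestronglyMeasurable)
    rw [hmap] at h
    rw [← h, integral_sq_gaussian hv]

lemma gamma_ae_nonneg (a r : ℝ) : ∀ᵐ x ∂(gammaMeasure a r), 0 ≤ x := by
  rw [ae_iff]
  have hset : {x : ℝ | ¬ 0 ≤ x} = Iio 0 := by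
    ext x
    simp [not_le]
  rw [hset, gammaMeasure, withDensity_apply _ measurableSet_Iio]
  exact lintegral_gammaPDF_of_nonpos le_rfl

lemma integrable_gamma_pdf_mul_id {a r : ℝ} (ha : 0 < a) (hr : 0 < r) :
    Integrable (fun x : ℝ => gammaPDFReal a r x * x) := by
  rw [← integrableOn_univ, ← Iic_union_Ioi (a := (0:ℝ)), integrableOn_union]
  constructor
  · have hEq : EqOn (fun _ : ℝ => (0:ℝ)) (fun x => gammaPDFReal a r x * x) (Iic 0) := by
      intro x hx
      rcases lt_or_eq_of_le (mem_Iic.mp hx) with h | h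
      · simp [gammaPDFReal, not_le.mpr h]
      · simp [h]
    exact (integrableOn_zero).congr_fun hEq measurableSet_Iic
  · have hint : IntegrableOn (fun x : ℝ => x ^ a * rexp (-(r * x))) (Ioi 0) := by
      have h := integrableOn_rpow_mul_exp_neg_mul_rpow (s := a) (p := 1) (by linarith) one_pos hr
      refine h.congr_fun (fun x hx => ?_) measurableSet_Ioi
      simp only [Real.rpow_one]
      ring_nf
    refine IntegrableOn.congr_fun (hint.const_mul (r ^ a / Real.Gamma a))
      (fun x hx => ?_) measurableSet_Ioi
    have hx0 : (0:ℝ) < x := hx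
    have hxa : x ^ (a - 1) * x = x ^ a := by
      nth_rewrite 2 [← Real.rpow_one x]
      rw [← Real.rpow_add hx0, sub_add_cancel]
    simp only [gammaPDFReal, if_pos hx0.le]
    rw [← hxa]
    ring

lemma integral_gamma_id {a r : ℝ} (ha : 0 < a) (hr : 0 < r) :
    ∫ x, x ∂(gammaMeasure a r) = a / r := by
  rw [gammaMeasure, show gammaPDF a r = fun x => ENNReal.ofReal (gammaPDFReal a r x) from rfl,
    integral_withDensity_ofReal (measurable_gammaPDFReal a r) (gammaPDFReal_nonneg ha hr)]
  rw [← integral_add_compl (measurableSet_Iic (a := (0:ℝ))) (integrable_gamma_pdf_mul_id ha hr),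
    compl_Iic]
  have h1 : ∫ x in Iic (0:ℝ), gammaPDFReal a r x * x = 0 := by
    rw [setIntegral_congr_fun measurableSet_Iic (g := fun _ => (0:ℝ)) ?_, integral_zero]
    intro x hx
    rcases lt_or_eq_of_le (mem_Iic.mp hx) with h | h
    · simp [gammaPDFReal, not_le.mpr h]
    · simp [h]
  have h2 : ∫ x in Ioi (0:ℝ), gammaPDFReal a r x * x
      = r ^ a / Real.Gamma a * ((1 / r) ^ (a + 1) * Real.Gamma (a + 1)) := by
    rw [setIntegral_congr_fun measurableSet_Ioi
      (g := fun x => r ^ a / Real.Gamma a * (x ^ ((a + 1) - 1) * rexp (-(r * x)))) ?_]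
    · rw [integral_const_mul, integral_rpow_mul_exp_neg_mul_Ioi (by linarith : (0:ℝ) < a + 1) hr]
    · intro x hx
      have hx0 : (0:ℝ) < x := hx
      have hxa : x ^ (a - 1) * x = x ^ a := by
        nth_rewrite 2 [← Real.rpow_one x]
        rw [← Real.rpow_add hx0, sub_add_cancel]
      simp only [gammaPDFReal, if_pos hx0.le]
      rw [show (a + 1) - 1 = a by ring, ← hxa]
      ring
  rw [h1, h2, zero_add]
  have hG : Real.Gamma a ≠ 0 := (Real.Gamma_pos_of_pos ha).ne'
  have key : r ^ a * (1 / r) ^ a = 1 := by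
    rw [← Real.mul_rpow hr.le (by positivity), mul_one_div_cancel hr.ne', Real.one_rpow]
  rw [Real.Gamma_add_one ha.ne', Real.rpow_add (by positivity : (0:ℝ) < 1 / r), Real.rpow_one]
  calc r ^ a / Real.Gamma a * ((1 / r) ^ a * (1 / r) * (a * Real.Gamma a))
      = (r ^ a * (1 / r) ^ a) * ((Real.Gamma a)⁻¹ * Real.Gamma a) * (a * (1 / r)) := by ring
    _ = a / r := by rw [key, inv_mul_cancel₀ hG]; ring

lemma gamma_rv {Ω : Type*} [MeasurableSpace Ω] {P : Measure Ω} {X : Ω → ℝ} (hXm : Measurable X)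
    {a r : ℝ} (ha : 0 < a) (hr : 0 < r) (hmap : P.map X = gammaMeasure a r) :
    Integrable X P ∧ (∫ ω, X ω ∂P) = a / r ∧ (∀ᵐ ω ∂P, 0 ≤ X ω) := by
  have hint : Integrable X P := by
    have h : Integrable (fun x : ℝ => x) (gammaMeasure a r) := by
      rw [gammaMeasure, show gammaPDF a r = fun x => ENNReal.ofReal (gammaPDFReal a r x) from rfl,
        integrable_withDensity_ofReal (measurable_gammaPDFReal a r) (gammaPDFReal_nonneg ha hr)]
      exact integrable_gamma_pdf_mul_id ha hr
    rw [← hmap] at h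
    exact (integrable_map_measure aestronglyMeasurable_id hXm.aemeasurable).mp h
  refine ⟨hint, ?_, ?_⟩
  · have h := integral_map (μ := P) (f := fun x : ℝ => x) hXm.aemeasurable aestronglyMeasurable_id
    rw [hmap] at h
    rw [← h, integral_gamma_id ha hr]
  · have h := gamma_ae_nonneg a r
    rw [← hmap] at h
    exact (ae_map_iff hXm.aemeasurable measurableSet_Ici).mp h

lemma arith (x y d cc : ℝ) (hx : 0 < x) (hy : 0 < y) (hd : 0 < d) (hk : x - 1 + cc ≠ 0) :
    (y / (x + y)) ^ 2 * ((x - 1) / (x - 1 + cc)) * (1 / (d * y))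
      = y * (x - 1) / (d * (x + y) ^ 2 * (cc + x - 1)) := by
  have hxy : x + y ≠ 0 := by positivity
  have hd0 : d ≠ 0 := hd.ne'
  have hy0 : y ≠ 0 := hy.ne'
  have hk' : cc + x - 1 ≠ 0 := by
    intro h
    exact hk (by linarith)
  field_simp
  ring

lemma variance_const_add {Ω : Type*} [MeasurableSpace Ω] {P : Measure Ω}
    [IsProbabilityMeasure P] {X : Ω → ℝ} (hX : Integrable X P) (m : ℝ) :
    variance (fun ω => m + X ω) P = variance X P := by
  have hint : ∫ ω, (m + X ω) ∂P = m + ∫ ω, X ω ∂P := by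
    rw [integral_add (integrable_const m) hX, integral_const]
    simp
  rw [ProbabilityTheory.variance, ProbabilityTheory.variance, ProbabilityTheory.evariance,
    ProbabilityTheory.evariance]
  congr 1
  refine lintegral_congr fun ω => ?_
  congr 2
  rw [hint]
  ring

end Stmt17Aux

open Stmt17Aux in
/-- mean and variance of the D-fold multiple-imputation mean estimator
under ML imputation. -/
theorem stmt17
    {Ω : Type*} [MeasurableSpace Ω] (P : Measure Ω) [IsProbabilityMeasure P]
    (μ σ : ℝ) (hσ : 0 < σ)
    (n_obs n_mis : ℕ) (hnobs : 2 ≤ n_obs) (hnmis : 2 ≤ n_mis)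
    (D : ℕ) (hD : 1 ≤ D)
    (U_obs Z_obs : Ω → ℝ) (Z_imp : Fin D → Ω → ℝ)
    (hUmeas : Measurable U_obs) (hZmeas : Measurable Z_obs)
    (hZimpmeas : ∀ d, Measurable (Z_imp d))
    (hU : P.map U_obs = gammaMeasure (((n_obs : ℝ) - 1) / 2) (1 / 2))
    (hZ : P.map Z_obs = gaussianReal 0 (1 / (n_obs : ℝ≥0)))
    (hZimp : ∀ d, P.map (Z_imp d) = gaussianReal 0 (1 / (n_mis : ℝ≥0)))
    (hindep : iIndepFun
      (Fin.cons U_obs (Fin.cons Z_obs Z_imp) : Fin (D + 2) → Ω → ℝ) P)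
    (c : ℝ) (hc : 0 < ((n_obs : ℝ) - 1) + c) :
    (∫ ω, μ + σ * (Z_obs ω
        + ((n_mis : ℝ) / ((n_obs : ℝ) + (n_mis : ℝ)))
            * Real.sqrt (U_obs ω / (((n_obs : ℝ) - 1) + c))
            * ((1 / (D : ℝ)) * ∑ d, Z_imp d ω)) ∂P) = μ
    ∧ variance (fun ω => μ + σ * (Z_obs ω
        + ((n_mis : ℝ) / ((n_obs : ℝ) + (n_mis : ℝ)))
            * Real.sqrt (U_obs ω / (((n_obs : ℝ) - 1) + c))
            * ((1 / (D : ℝ)) * ∑ d, Z_imp d ω))) P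
      = σ ^ 2 * (1 / (n_obs : ℝ)
          + (n_mis : ℝ) * ((n_obs : ℝ) - 1)
              / ((D : ℝ) * ((n_obs : ℝ) + (n_mis : ℝ)) ^ 2 * (c + (n_obs : ℝ) - 1))) := by
  have hnobsR : (2:ℝ) ≤ (n_obs:ℝ) := by exact_mod_cast hnobs
  have hnmisR : (2:ℝ) ≤ (n_mis:ℝ) := by exact_mod_cast hnmis
  have hDR : (1:ℝ) ≤ (D:ℝ) := by exact_mod_cast hD
  set k : ℝ := ((n_obs:ℝ) - 1) + c with hkdef
  set κ : ℝ := (n_mis:ℝ) / ((n_obs:ℝ) + (n_mis:ℝ)) with hκdef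
  set W : Ω → ℝ := fun ω => Real.sqrt (U_obs ω / k) with hWdef
  set M : Ω → ℝ := fun ω => (1 / (D:ℝ)) * ∑ d, Z_imp d ω with hMdef
  set Y : Ω → ℝ := fun ω => κ * W ω * M ω with hYdef
  set F : Fin (D + 2) → Ω → ℝ := Fin.cons U_obs (Fin.cons Z_obs Z_imp) with hFdef
  have hFmeas : ∀ i, Measurable (F i) := by
    intro i
    refine Fin.cases ?_ (fun j => ?_) i
    · simpa [hFdef] using hUmeas
    · simp only [hFdef, Fin.cons_succ]
      refine Fin.cases ?_ (fun d => ?_) j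
      · simpa using hZmeas
      · simpa using hZimpmeas d
  have hF0 : F 0 = U_obs := by simp [hFdef]
  have hF1 : F 1 = Z_obs := by
    rw [hFdef, show (1 : Fin (D+2)) = Fin.succ 0 from rfl, Fin.cons_succ, Fin.cons_zero]
  have hFd : ∀ d : Fin D, F d.succ.succ = Z_imp d := fun d => by
    simp [hFdef, Fin.cons_succ]
  -- Gaussian facts for Z_obs
  have hnobs0 : (n_obs:ℝ≥0) ≠ 0 := Nat.cast_ne_zero.mpr (by omega)
  have hnmis0 : (n_mis:ℝ≥0) ≠ 0 := Nat.cast_ne_zero.mpr (by omega)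
  have hvobs : (1 / (n_obs:ℝ≥0)) ≠ 0 := by
    rw [one_div]; exact inv_ne_zero hnobs0
  have hvmis : (1 / (n_mis:ℝ≥0)) ≠ 0 := by
    rw [one_div]; exact inv_ne_zero hnmis0
  obtain ⟨hZ2, hEZ, hEZ2⟩ := gauss_rv hZmeas hvobs hZ
  have hEZ2' : ∫ ω, (Z_obs ω) ^ 2 ∂P = 1 / (n_obs:ℝ) := by
    rw [hEZ2]; push_cast; ring
  have hZd2 : ∀ d, MemLp (Z_imp d) 2 P := fun d => (gauss_rv (hZimpmeas d) hvmis (hZimp d)).1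
  have hEZd : ∀ d, ∫ ω, Z_imp d ω ∂P = 0 := fun d => (gauss_rv (hZimpmeas d) hvmis (hZimp d)).2.1
  have hEZd2 : ∀ d, ∫ ω, (Z_imp d ω) ^ 2 ∂P = 1 / (n_mis:ℝ) := fun d => by
    rw [(gauss_rv (hZimpmeas d) hvmis (hZimp d)).2.2]; push_cast; ring
  -- Gamma facts for U_obs
  have ha : (0:ℝ) < ((n_obs:ℝ) - 1) / 2 := by linarith
  have hr : (0:ℝ) < 1 / 2 := by norm_num
  obtain ⟨hUint, hEU, hUnn⟩ := gamma_rv hUmeas ha hr hU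
  have hEU' : ∫ ω, U_obs ω ∂P = (n_obs:ℝ) - 1 := by
    rw [hEU]; ring
  -- W facts
  have hWmeas : Measurable W := (hUmeas.div_const k).sqrt
  have hWnn : ∀ ω, 0 ≤ W ω := fun ω => Real.sqrt_nonneg _
  have hWsq : (fun ω => W ω ^ 2) =ᵐ[P] (fun ω => U_obs ω / k) := by
    filter_upwards [hUnn] with ω hω
    exact Real.sq_sqrt (div_nonneg hω hc.le)
  have hWint : Integrable W P := by
    refine Integrable.mono ((integrable_const (1:ℝ)).add (hUint.div_const k))
      hWmeas.aestronglyMeasurable ?_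
    filter_upwards [hUnn] with ω hω
    have ht : 0 ≤ U_obs ω / k := div_nonneg hω hc.le
    have hs := Real.sq_sqrt ht
    have h1 : W ω ≤ 1 + U_obs ω / k := by
      nlinarith [Real.sqrt_nonneg (U_obs ω / k)]
    rw [Real.norm_eq_abs, Real.norm_eq_abs, abs_of_nonneg (hWnn ω)]
    exact h1.trans (le_abs_self _)
  have hW2int : Integrable (fun ω => W ω ^ 2) P := (hUint.div_const k).congr hWsq.symm
  have hEW2 : ∫ ω, W ω ^ 2 ∂P = ((n_obs:ℝ) - 1) / k := by
    rw [integral_congr_ae hWsq, integral_div, hEU']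
  -- M facts
  have hMmeas : Measurable M :=
    (Finset.measurable_sum Finset.univ (fun d _ => hZimpmeas d)).const_mul _
  have hsumfun : (∑ d, Z_imp d) = fun ω => ∑ d, Z_imp d ω := by
    funext ω
    simp [Finset.sum_apply]
  have hSmem : MemLp (fun ω => ∑ d, Z_imp d ω) 2 P := by
    rw [← hsumfun]
    exact memLp_finset_sum' Finset.univ (fun d _ => hZd2 d)
  have hM2 : MemLp M 2 P := hSmem.const_mul (1 / (D:ℝ))
  have hMint : Integrable M P := hM2.integrable one_le_two
  have hM2int : Integrable (fun ω => M ω ^ 2) P := hM2.integrable_sq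
  have hES : ∫ ω, (∑ d, Z_imp d ω) ∂P = 0 := by
    rw [integral_finset_sum Finset.univ (fun d _ => (hZd2 d).integrable one_le_two)]
    simp [hEZd]
  have hEM : ∫ ω, M ω ∂P = 0 := by
    simp only [hMdef]
    rw [integral_const_mul, hES, mul_zero]
  have hpairwise : Set.Pairwise ↑(Finset.univ : Finset (Fin D))
      (fun i j => IndepFun (Z_imp i) (Z_imp j) P) := by
    intro i _ j _ hij
    have hne : (i.succ.succ : Fin (D+2)) ≠ j.succ.succ := by
      simp only [ne_eq, Fin.succ_inj]
      exact hij
    have h := hindep.indepFun hne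
    rwa [hFd i, hFd j] at h
  have hvar1 : ∀ d, variance (Z_imp d) P = 1 / (n_mis:ℝ) := fun d => by
    rw [variance_eq_sub (hZd2 d)]
    simp only [Pi.pow_apply]
    rw [hEZd2 d, hEZd d]
    ring
  have hvarS : variance (fun ω => ∑ d, Z_imp d ω) P = (D:ℝ) / (n_mis:ℝ) := by
    rw [← hsumfun, IndepFun.variance_sum (fun d _ => hZd2 d) hpairwise]
    simp [hvar1, Finset.sum_const, Finset.card_univ]
    ring
  have hS2 : ∫ ω, (∑ d, Z_imp d ω) ^ 2 ∂P = (D:ℝ) / (n_mis:ℝ) := by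
    have hv := variance_eq_sub hSmem
    simp only [Pi.pow_apply] at hv
    rw [hES] at hv
    rw [hvarS] at hv
    simp at hv
    linarith
  have hEM2 : ∫ ω, M ω ^ 2 ∂P = 1 / ((D:ℝ) * (n_mis:ℝ)) := by
    have h1 : ∫ ω, M ω ^ 2 ∂P = (1/(D:ℝ))^2 * ∫ ω, (∑ d, Z_imp d ω) ^ 2 ∂P := by
      rw [← integral_const_mul]
      congr 1 with ω
      simp only [hMdef]
      ring
    rw [h1, hS2]
    have hD0 : (D:ℝ) ≠ 0 := by linarith
    have hm0 : (n_mis:ℝ) ≠ 0 := by linarith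
    field_simp
  -- independence of W and M
  have hindepWM : IndepFun W M P := by
    have h := hindep.indepFun_finset {0} ({0}ᶜ) disjoint_compl_right hFmeas
    have hmem0 : (0 : Fin (D+2)) ∈ ({0} : Finset (Fin (D+2))) := Finset.mem_singleton_self 0
    have hmemd : ∀ d : Fin D, (d.succ.succ : Fin (D+2)) ∈ ({0} : Finset (Fin (D+2)))ᶜ := by
      intro d
      simp [Finset.mem_compl, Fin.succ_ne_zero]
    have hφm : Measurable (fun v : (({0} : Finset (Fin (D+2))) : Finset _) → ℝ =>
        Real.sqrt (v ⟨0, hmem0⟩ / k)) := by fun_prop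
    have hsum0 : Measurable (fun v : ((({0} : Finset (Fin (D+2)))ᶜ : Finset _) : Finset _) → ℝ =>
        ∑ d : Fin D, v ⟨d.succ.succ, hmemd d⟩) :=
      Finset.measurable_sum Finset.univ
        (fun d _ => measurable_pi_apply (⟨d.succ.succ, hmemd d⟩ :
          ((({0} : Finset (Fin (D+2)))ᶜ : Finset _) : Finset _)))
    have hψm : Measurable (fun v : ((({0} : Finset (Fin (D+2)))ᶜ : Finset _) : Finset _) → ℝ =>
        (1/(D:ℝ)) * ∑ d : Fin D, v ⟨d.succ.succ, hmemd d⟩) := hsum0.const_mul _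
    have h2 := h.comp hφm hψm
    have hWeq : W = (fun v : (({0} : Finset (Fin (D+2))) : Finset _) → ℝ =>
        Real.sqrt (v ⟨0, hmem0⟩ / k)) ∘ (fun ω (i : ({0} : Finset (Fin (D+2)))) => F i ω) := by
      funext ω
      simp [hWdef, Function.comp, hF0]
    have hMeq : M = (fun v : ((({0} : Finset (Fin (D+2)))ᶜ : Finset _) : Finset _) → ℝ =>
        (1/(D:ℝ)) * ∑ d : Fin D, v ⟨d.succ.succ, hmemd d⟩)
          ∘ (fun ω (i : (({0} : Finset (Fin (D+2)))ᶜ : Finset _)) => F i ω) := by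
      funext ω
      simp only [hMdef, Function.comp_apply]
      congr 1
    rw [hWeq, hMeq]
    exact h2
  have hindepW2M2 : IndepFun (fun ω => W ω ^ 2) (fun ω => M ω ^ 2) P :=
    hindepWM.comp (measurable_id.pow_const 2) (measurable_id.pow_const 2)
  -- independence of Z_obs and Y
  have hindepZY : IndepFun Z_obs Y P := by
    have h := hindep.indepFun_finset {1} ({1}ᶜ) disjoint_compl_right hFmeas
    have hmem1 : (1 : Fin (D+2)) ∈ ({1} : Finset (Fin (D+2))) := Finset.mem_singleton_self 1
    have hmem0 : (0 : Fin (D+2)) ∈ ({1} : Finset (Fin (D+2)))ᶜ := by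
      simp only [Finset.mem_compl, Finset.mem_singleton]
      simp [Fin.ext_iff]
    have hmemd : ∀ d : Fin D, (d.succ.succ : Fin (D+2)) ∈ ({1} : Finset (Fin (D+2)))ᶜ := by
      intro d
      simp only [Finset.mem_compl, Finset.mem_singleton]
      simp [Fin.ext_iff, Fin.val_succ]
    have hφm : Measurable (fun v : (({1} : Finset (Fin (D+2))) : Finset _) → ℝ =>
        v ⟨1, hmem1⟩) := measurable_pi_apply _
    have hψm : Measurable (fun v : ((({1} : Finset (Fin (D+2)))ᶜ : Finset _) : Finset _) → ℝ =>
        κ * Real.sqrt (v ⟨0, hmem0⟩ / k) * ((1/(D:ℝ)) * ∑ d : Fin D, v ⟨d.succ.succ, hmemd d⟩)) := by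
      have hsum1 : Measurable (fun v : ((({1} : Finset (Fin (D+2)))ᶜ : Finset _) : Finset _) → ℝ =>
          ∑ d : Fin D, v ⟨d.succ.succ, hmemd d⟩) :=
        Finset.measurable_sum Finset.univ
          (fun d _ => measurable_pi_apply (⟨d.succ.succ, hmemd d⟩ :
            ((({1} : Finset (Fin (D+2)))ᶜ : Finset _) : Finset _)))
      fun_prop
    have h2 := h.comp hφm hψm
    have hZeq : Z_obs = (fun v : (({1} : Finset (Fin (D+2))) : Finset _) → ℝ =>
        v ⟨1, hmem1⟩) ∘ (fun ω (i : ({1} : Finset (Fin (D+2)))) => F i ω) := by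
      funext ω
      simp [Function.comp, hF1]
    have hYeq : Y = (fun v : ((({1} : Finset (Fin (D+2)))ᶜ : Finset _) : Finset _) → ℝ =>
        κ * Real.sqrt (v ⟨0, hmem0⟩ / k) * ((1/(D:ℝ)) * ∑ d : Fin D, v ⟨d.succ.succ, hmemd d⟩))
          ∘ (fun ω (i : (({1} : Finset (Fin (D+2)))ᶜ : Finset _)) => F i ω) := by
      funext ω
      simp only [hYdef, hWdef, hMdef, Function.comp_apply, hF0]
      congr 2
    rw [hZeq, hYeq]
    exact h2
  -- Y facts
  have hYmeas : Measurable Y := (hWmeas.const_mul κ).mul hMmeas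
  have hYint : Integrable Y P := by
    refine ((hindepWM.integrable_mul hWint hMint).const_mul κ).congr (ae_of_all _ fun ω => ?_)
    simp only [hYdef, Pi.mul_apply]
    all_goals ring
  have hEY : ∫ ω, Y ω ∂P = 0 := by
    have h1 : ∫ ω, Y ω ∂P = κ * ∫ ω, W ω * M ω ∂P := by
      rw [← integral_const_mul]
      congr 1 with ω
      simp only [hYdef]
      ring
    have hWM : ∫ ω, W ω * M ω ∂P = (∫ ω, W ω ∂P) * ∫ ω, M ω ∂P :=
      hindepWM.integral_fun_mul_eq_mul_integral hWint.aestronglyMeasurable hMint.aestronglyMeasurable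
    rw [h1, hWM, hEM, mul_zero, mul_zero]
  have hY2 : MemLp Y 2 P := by
    rw [memLp_two_iff_integrable_sq hYmeas.aestronglyMeasurable]
    refine ((hindepW2M2.integrable_mul hW2int hM2int).const_mul (κ^2)).congr
      (ae_of_all _ fun ω => ?_)
    simp only [hYdef, Pi.mul_apply]
    all_goals ring
  have hEY2 : ∫ ω, Y ω ^ 2 ∂P = κ^2 * (((n_obs:ℝ) - 1) / k) * (1 / ((D:ℝ) * (n_mis:ℝ))) := by
    have h1 : ∫ ω, Y ω ^ 2 ∂P = κ^2 * ∫ ω, W ω ^ 2 * M ω ^ 2 ∂P := by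
      rw [← integral_const_mul]
      congr 1 with ω
      simp only [hYdef]
      ring
    have hWM2 : ∫ ω, W ω ^ 2 * M ω ^ 2 ∂P = (∫ ω, W ω ^ 2 ∂P) * ∫ ω, M ω ^ 2 ∂P :=
      hindepW2M2.integral_fun_mul_eq_mul_integral hW2int.aestronglyMeasurable hM2int.aestronglyMeasurable
    rw [h1, hWM2, hEW2, hEM2]
    ring
  -- variances
  have hZint : Integrable Z_obs P := hZ2.integrable one_le_two
  have hvarZ : variance Z_obs P = 1 / (n_obs:ℝ) := by
    rw [variance_eq_sub hZ2]
    simp only [Pi.pow_apply]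
    rw [hEZ2', hEZ]
    ring
  have hvarY : variance Y P = κ^2 * (((n_obs:ℝ) - 1) / k) * (1 / ((D:ℝ) * (n_mis:ℝ))) := by
    rw [variance_eq_sub hY2]
    simp only [Pi.pow_apply]
    rw [hEY2, hEY]
    ring
  have hvarZY : variance (fun ω => Z_obs ω + Y ω) P
      = 1 / (n_obs:ℝ) + κ^2 * (((n_obs:ℝ) - 1) / k) * (1 / ((D:ℝ) * (n_mis:ℝ))) := by
    have h := hindepZY.variance_add hZ2 hY2
    have hfun : (fun ω => Z_obs ω + Y ω) = Z_obs + Y := rfl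
    rw [hfun, h, hvarZ, hvarY]
  have hσint : Integrable (fun ω => σ * (Z_obs ω + Y ω)) P := by
    have hadd : Integrable (fun ω => Z_obs ω + Y ω) P := hZint.add hYint
    exact hadd.const_mul σ
  constructor
  · show (∫ ω, μ + σ * (Z_obs ω + Y ω) ∂P) = μ
    rw [integral_add (integrable_const μ) hσint,
      integral_const_mul σ (fun ω => Z_obs ω + Y ω),
      integral_add hZint hYint, hEZ, hEY]
    simp
  · show variance (fun ω => μ + σ * (Z_obs ω + Y ω)) P = _
    have hshift := Stmt17Aux.variance_const_add hσint μ
    have hmul := variance_const_mul σ (fun ω => Z_obs ω + Y ω) P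
    rw [hshift, hmul, hvarZY]
    rw [hκdef, hkdef]
    rw [Stmt17Aux.arith (n_obs:ℝ) (n_mis:ℝ) (D:ℝ) c (by linarith) (by linarith) (by linarith)
      (by rw [hkdef] at hc; exact hc.ne')]
end
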